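/- arXiv:1708.08509 — 8 statements merged into one kernel-verified Lean document; each statement's English description precedes it below -/
import Mathlib

section
/- Let F be a group, let G be a finite abelian irreducible F-group, and let 𝔪 be a natural number such that there exists x ∈ G^𝔪 with [x]_F = G^𝔪 but there exists no y ∈ G^{𝔪+1} with [y]_F = G^{𝔪+1}. Then h_F(G)^𝔪 = |G|. -/
section FGroupDefs

variable (F : Type*) [Group F]

/-- A subgroup of an `F`-group is a *normal `F`-subgroup* if it is normal and
stable under the `F`-action. -/
def IsNormalFSubgroup {G : Type*} [Group G] [MulDistribMulAction F G]
    (H : Subgroup G) : Prop :=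
  H.Normal ∧ ∀ (f : F) (x : G), x ∈ H → f • x ∈ H

/-- An *irreducible `F`-group* is a nontrivial `F`-group whose only normal
`F`-subgroups are the trivial subgroup and the whole group. -/
def IsIrreducibleFGroup (G : Type*) [Group G] [MulDistribMulAction F G] : Prop :=
  Nontrivial G ∧ ∀ H : Subgroup G, IsNormalFSubgroup F H → H = ⊥ ∨ H = ⊤

/-- `[s]_F`: the smallest normal `F`-subgroup containing the set `s`. -/
def normalFClosure {G : Type*} [Group G] [MulDistribMulAction F G] (s : Set G) :
    Subgroup G :=
  sInf {H : Subgroup G | IsNormalFSubgroup F H ∧ s ⊆ H}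

/-- A group homomorphism is an `F`-group morphism if it commutes with the `F`-actions. -/
def IsFHom {G G' : Type*} [Group G] [Group G'] [MulDistribMulAction F G]
    [MulDistribMulAction F G'] (φ : G →* G') : Prop :=
  ∀ (f : F) (x : G), φ (f • x) = f • φ x

/-- `h_F(G)`: the number of `F`-group endomorphisms of `G`. -/
noncomputable def hF (G : Type*) [Group G] [MulDistribMulAction F G] : ℕ :=
  Nat.card {φ : G →* G // IsFHom F φ}

/-- Two `F`-groups are isomorphic if there is a bijective group homomorphism
between them commuting with the `F`-actions. -/
def IsFIso (G G' : Type*) [Group G] [Group G'] [MulDistribMulAction F G]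
    [MulDistribMulAction F G'] : Prop :=
  ∃ e : G ≃* G', ∀ (f : F) (x : G), e (f • x) = f • e x

end FGroupDefs

open Additive

section Aux

variable (F : Type*) [Group F]

/-- helper: in a commutative ambient group, stability gives normal F-subgroup. -/
lemma isNormalF_of_stable {H : Type*} [CommGroup H] [MulDistribMulAction F H]
    (S : Subgroup H) (hst : ∀ (f : F) (x : H), x ∈ S → f • x ∈ S) :
    IsNormalFSubgroup F S :=
  ⟨⟨fun n hn g => by simpa [mul_comm, mul_assoc] using hn⟩, hst⟩

lemma mem_normalFClosure_self {H : Type*} [Group H] [MulDistribMulAction F H]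
    (x : H) : x ∈ normalFClosure F {x} :=
  Subgroup.mem_sInf.2 fun _ hS => hS.2 rfl

lemma normalFClosure_le {H : Type*} [Group H] [MulDistribMulAction F H]
    {x : H} {S : Subgroup H} (hS : IsNormalFSubgroup F S) (hx : x ∈ S) :
    normalFClosure F {x} ≤ S :=
  sInf_le ⟨hS, Set.singleton_subset_iff.2 hx⟩

lemma normalFClosure_stable {H : Type*} [Group H] [MulDistribMulAction F H]
    (s : Set H) (f : F) (x : H) (hx : x ∈ normalFClosure F s) :
    f • x ∈ normalFClosure F s :=
  Subgroup.mem_sInf.2 fun S hS => hS.1.2 f x (Subgroup.mem_sInf.1 hx S hS)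

variable (G : Type*) [CommGroup G] [MulDistribMulAction F G]

instance addAct : DistribMulAction F (Additive G) where
  smul f a := Additive.ofMul (f • a.toMul)
  one_smul a := one_smul F a.toMul
  mul_smul f g a := mul_smul f g a.toMul
  smul_zero f := by show Additive.ofMul (f • (1:G)) = (0:Additive G); rw [smul_one]; rfl
  smul_add f a b := smul_mul' f a.toMul b.toMul

lemma addAct_smul_def (f : F) (a : Additive G) : f • a = Additive.ofMul (f • a.toMul) := rfl

/-- the ring of `F`-equivariant additive endomorphisms of `Additive G`. -/
def fRing : Subring (AddMonoid.End (Additive G)) where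
  carrier := {ψ | ∀ (f : F) (a : Additive G), ψ (f • a) = f • ψ a}
  zero_mem' := by intro f a; show (0:Additive G) = f • (0:Additive G); rw [smul_zero]
  one_mem' := by intro f a; rfl
  add_mem' := by
    intro ψ φ hψ hφ f a
    show ψ (f • a) + φ (f • a) = f • (ψ a + φ a); rw [hψ, hφ, smul_add]
  neg_mem' := by
    intro ψ hψ f a; show -(ψ (f • a)) = f • -(ψ a); rw [hψ, smul_neg]
  mul_mem' := by intro ψ φ hψ hφ f a; show ψ (φ _) = f • ψ (φ a); rw [hφ, hψ]

instance [Finite G] : Finite (AddMonoid.End (Additive G)) :=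
  Finite.of_injective (fun ψ => (ψ : Additive G → Additive G)) DFunLike.coe_injective

variable {F G}

lemma fRing_zero_iff (k : ↥(fRing F G)) : k = 0 ↔ ∀ a : Additive G, k.val a = 0 := by
  constructor
  · rintro rfl a; rfl
  · intro h; exact Subtype.ext (AddMonoidHom.ext h)

/-- transfer irreducibility to additive subgroups. -/
lemma addSubgroup_eq_bot_or_top (hirr : IsIrreducibleFGroup F G)
    (H : AddSubgroup (Additive G)) (hst : ∀ (f : F) (a : Additive G), a ∈ H → f • a ∈ H) :
    H = ⊥ ∨ H = ⊤ := by
  have := hirr.2 (AddSubgroup.toSubgroup' H)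
      ⟨inferInstance, fun f x hx => hst f (Additive.ofMul x) hx⟩
  rcases this with h | h
  · left
    have := congrArg (AddSubgroup.toSubgroup' (G := G)).symm h
    simpa using this
  · right
    have := congrArg (AddSubgroup.toSubgroup' (G := G)).symm h
    simpa using this

/-- Schur: nonzero equivariant endomorphisms are bijective. -/
lemma fRing_bijective (hirr : IsIrreducibleFGroup F G) (k : ↥(fRing F G)) (hk : k ≠ 0) :
    Function.Bijective (k.val : Additive G →+ Additive G) := by
  constructor
  · have : (k.val : Additive G →+ Additive G).ker = ⊥ ∨ _ = ⊤ :=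
      addSubgroup_eq_bot_or_top hirr _ (by
        intro f a ha
        have : k.val (f • a) = 0 := by
          have ha' : k.val a = 0 := AddMonoidHom.mem_ker.1 ha
          rw [k.2 f a, ha', smul_zero]
        exact AddMonoidHom.mem_ker.2 this)
    rcases this with h | h
    · exact (AddMonoidHom.ker_eq_bot_iff _).1 h
    · exact absurd (fRing_zero_iff k |>.2 fun a => AddMonoidHom.mem_ker.1 (h ▸ AddSubgroup.mem_top a)) hk
  · have : (k.val : Additive G →+ Additive G).range = ⊥ ∨ _ = ⊤ :=
      addSubgroup_eq_bot_or_top hirr _ (by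
        rintro f a ⟨b, rfl⟩
        exact ⟨f • b, (k.2 f b)⟩)
    rcases this with h | h
    · refine absurd (fRing_zero_iff k |>.2 fun a => ?_) hk
      have : k.val a ∈ (k.val : Additive G →+ Additive G).range := ⟨a, rfl⟩
      rwa [h, AddSubgroup.mem_bot] at this
    · intro b
      have : b ∈ (k.val : Additive G →+ Additive G).range := h ▸ AddSubgroup.mem_top b
      exact this

lemma fRing_nontrivial (hnt : Nontrivial G) : Nontrivial ↥(fRing F G) := by
  obtain ⟨g, hg⟩ := exists_ne (1 : G)
  refine ⟨1, 0, fun h => hg ?_⟩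
  have := (fRing_zero_iff (1 : ↥(fRing F G))).1 h (Additive.ofMul g)
  simpa using this

lemma fRing_noZeroDivisors (hirr : IsIrreducibleFGroup F G) :
    ∀ a b : ↥(fRing F G), a * b = 0 → a = 0 ∨ b = 0 := by
  intro a b hab
  by_cases ha : a = 0
  · exact Or.inl ha
  · refine Or.inr ((fRing_zero_iff b).2 fun x => ?_)
    have hinj := (fRing_bijective hirr a ha).1
    have : a.val (b.val x) = a.val 0 := by
      have : (a * b).val x = 0 := by rw [hab]; rfl
      simpa using this
    exact hinj this

end Aux

section Rel

variable {F G : Type*} [Group F] [CommGroup G] [MulDistribMulAction F G]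

/-- no nontrivial `fRing`-relation among the components of `x`. -/
def FRel (m : ℕ) (x : Fin m → G) : Prop :=
  ∀ c : Fin m → ↥(fRing F G), (∑ i, (c i).val (Additive.ofMul (x i))) = 0 → ∀ i, c i = 0

lemma smul_mulSingle {m : ℕ} (i : Fin m) (f : F) (a : G) :
    f • Pi.mulSingle (M := fun _ : Fin m => G) i a = Pi.mulSingle i (f • a) := by
  funext j
  rcases eq_or_ne j i with rfl | h
  · simp
  · simp [Pi.mulSingle_eq_of_ne h, smul_one]

lemma rel_of_closure_eq_top {m : ℕ} {x : Fin m → G}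
    (hx : normalFClosure F {x} = ⊤) : FRel (F := F) m x := by
  intro c hsum
  by_contra hcon
  push_neg at hcon
  obtain ⟨j, hj⟩ := hcon
  set Φ : (Fin m → G) →* G :=
    { toFun := fun w => (∑ i, (c i).val (Additive.ofMul (w i))).toMul
      map_one' := by
        simp only [Pi.one_apply, ofMul_one, map_zero, Finset.sum_const_zero, toMul_zero]
      map_mul' := by
        intro w v
        simp only [Pi.mul_apply, ofMul_mul, map_add, Finset.sum_add_distrib, toMul_add] } with hΦ
  have hΦ_apply : ∀ w : Fin m → G,
      Φ w = (∑ i, (c i).val (Additive.ofMul (w i))).toMul := fun w => rfl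
  have hker_st : ∀ (f : F) (w : Fin m → G), w ∈ Φ.ker → f • w ∈ Φ.ker := by
    intro f w hw
    have hcomp : ∀ i, (c i).val (Additive.ofMul ((f • w) i)) =
        f • (c i).val (Additive.ofMul (w i)) := by
      intro i
      have h1 : Additive.ofMul ((f • w) i) = f • Additive.ofMul (w i) := rfl
      rw [h1, (c i).2]
    have : Φ (f • w) = f • Φ w := by
      rw [hΦ_apply, hΦ_apply, Finset.sum_congr rfl fun i _ => hcomp i, ← Finset.smul_sum]
      rfl
    rw [MonoidHom.mem_ker, this, MonoidHom.mem_ker.1 hw, smul_one]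
  have hxker : x ∈ Φ.ker := by
    rw [MonoidHom.mem_ker, hΦ_apply, hsum, toMul_zero]
  have hker_top : Φ.ker = ⊤ :=
    top_le_iff.1 (hx ▸ normalFClosure_le F (isNormalF_of_stable F _ hker_st) hxker)
  obtain ⟨a, ha⟩ : ∃ a, (c j).val a ≠ 0 := by
    by_contra h
    push_neg at h
    exact hj ((fRing_zero_iff _).2 h)
  have hw : Pi.mulSingle (M := fun _ : Fin m => G) j a.toMul ∈ Φ.ker :=
    hker_top ▸ Subgroup.mem_top _
  rw [MonoidHom.mem_ker, hΦ_apply] at hw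
  have hsum' : (∑ i, (c i).val (Additive.ofMul
      (Pi.mulSingle (M := fun _ : Fin m => G) j a.toMul i))) = (c j).val a := by
    rw [Finset.sum_eq_single j]
    · simp
    · intro i _ hij
      rw [Pi.mulSingle_eq_of_ne hij, ofMul_one, map_zero]
    · intro h; exact absurd (Finset.mem_univ j) h
  rw [hsum'] at hw
  exact ha (by simpa using congrArg Additive.ofMul hw)

end Rel

section Induction

variable {F G : Type*} [Group F] [CommGroup G] [MulDistribMulAction F G]

lemma closure_eq_top_of_frel (hirr : IsIrreducibleFGroup F G) :
    ∀ (m : ℕ) (x : Fin m → G), FRel (F := F) m x → normalFClosure F {x} = ⊤ := by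
  intro m
  induction m with
  | zero =>
    intro x _
    rw [Subgroup.eq_top_iff']
    intro w
    have hw : w = 1 := Subsingleton.elim _ _
    rw [hw]; exact one_mem _
  | succ m ih =>
    intro x hrel
    haveI : Nontrivial G := hirr.1
    set N := normalFClosure F {x} with hN
    have hxN : x ∈ N := mem_normalFClosure_self F x
    have hNst : ∀ (f : F) (w : Fin (m+1) → G), w ∈ N → f • w ∈ N :=
      fun f w hw => normalFClosure_stable F _ f w hw
    set π : (Fin (m+1) → G) →* (Fin m → G) :=
      { toFun := fun w => w ∘ Fin.succ, map_one' := rfl, map_mul' := fun _ _ => rfl } with hπdef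
    have hπ_apply : ∀ (w : Fin (m+1) → G) (i : Fin m), π w i = w i.succ := fun _ _ => rfl
    have hrel' : FRel (F := F) m (x ∘ Fin.succ) := by
      intro c hsum i
      have h := hrel (Fin.cons 0 c) ?_ i.succ
      · simpa using h
      · rw [Fin.sum_univ_succ]
        simp only [Fin.cons_zero, Fin.cons_succ]
        have h0 : ((0 : ↥(fRing F G))).val (Additive.ofMul (x 0)) = 0 := rfl
        rw [h0, zero_add]
        exact hsum
    have hmap_st : ∀ (f : F) (b : Fin m → G), b ∈ N.map π → f • b ∈ N.map π := by
      rintro f b hb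
      obtain ⟨n, hn, rfl⟩ := Subgroup.mem_map.1 hb
      exact Subgroup.mem_map.2 ⟨f • n, hNst f n hn, rfl⟩
    have hπN : N.map π = ⊤ :=
      top_le_iff.1 ((ih _ hrel') ▸ normalFClosure_le F (isNormalF_of_stable F _ hmap_st)
        (Subgroup.mem_map.2 ⟨x, hxN, rfl⟩))
    set ι : G →* (Fin (m+1) → G) := MonoidHom.mulSingle (fun _ => G) 0 with hι
    have hι_apply : ∀ a, ι a = Pi.mulSingle 0 a := fun _ => rfl
    set H0 : Subgroup G := N.comap ι with hH0
    have hH0st : ∀ (f : F) (a : G), a ∈ H0 → f • a ∈ H0 := by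
      intro f a ha
      rw [hH0, Subgroup.mem_comap] at ha ⊢
      have h1 : ι (f • a) = f • ι a := by rw [hι_apply, hι_apply, smul_mulSingle]
      rw [h1]
      exact hNst f _ ha
    rcases hirr.2 H0 (isNormalF_of_stable F H0 hH0st) with hbot | htop
    · -- H0 = ⊥ : contradiction with independence
      exfalso
      have huniq : ∀ n ∈ N, ∀ n' ∈ N, π n = π n' → n = n' := by
        intro n hn n' hn' hπeq
        have hmem : n * n'⁻¹ ∈ N := mul_mem hn (inv_mem hn')
        have hsingle : n * n'⁻¹ = Pi.mulSingle 0 ((n * n'⁻¹) 0) := by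
          funext j
          refine Fin.cases ?_ ?_ j
          · simp
          · intro i
            have hcoord : n i.succ = n' i.succ := congrFun hπeq i
            rw [Pi.mulSingle_eq_of_ne (Fin.succ_ne_zero i)]
            simp [Pi.mul_apply, Pi.inv_apply, hcoord]
        have h0mem : (n * n'⁻¹) 0 ∈ H0 := by
          rw [hH0, Subgroup.mem_comap, hι_apply, ← hsingle]
          exact hmem
        rw [hbot, Subgroup.mem_bot] at h0mem
        have hone : n * n'⁻¹ = 1 := by
          rw [hsingle, h0mem]
          exact Pi.mulSingle_one 0
        exact mul_inv_eq_one.1 hone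
      have hex : ∀ b : Fin m → G, ∃ n, n ∈ N ∧ π n = b := by
        intro b
        have hb : b ∈ N.map π := hπN ▸ Subgroup.mem_top b
        obtain ⟨n, hn, hnb⟩ := Subgroup.mem_map.1 hb
        exact ⟨n, hn, hnb⟩
      choose σ hσN hσπ using hex
      have hσ_eq : ∀ w ∈ N, σ (π w) = w := fun w hw => huniq _ (hσN _) _ hw (hσπ _)
      have hσ_mul : ∀ b b', σ (b * b') = σ b * σ b' := by
        intro b b'
        refine huniq _ (hσN _) _ (mul_mem (hσN b) (hσN b')) ?_
        rw [hσπ, map_mul, hσπ, hσπ]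
      have hσ_smul : ∀ (f : F) b, σ (f • b) = f • σ b := by
        intro f b
        refine huniq _ (hσN _) _ (hNst f _ (hσN b)) ?_
        rw [hσπ]
        have h2 : π (f • σ b) = f • π (σ b) := rfl
        rw [h2, hσπ]
      set ψ : (Fin m → G) →* G :=
        { toFun := fun b => σ b 0
          map_one' := by
            have h1 : σ 1 = 1 := huniq _ (hσN _) _ (one_mem N) (by rw [hσπ, map_one])
            show σ 1 0 = 1
            rw [h1]; rfl
          map_mul' := fun b b' => by
            show σ (b * b') 0 = σ b 0 * σ b' 0
            rw [hσ_mul]; rfl } with hψdef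
      have hψ_apply : ∀ b, ψ b = σ b 0 := fun _ => rfl
      have hψ_smul : ∀ (f : F) b, ψ (f • b) = f • ψ b := by
        intro f b; rw [hψ_apply, hψ_apply, hσ_smul]; rfl
      set kOf : Fin m → ↥(fRing F G) := fun i =>
        ⟨MonoidHom.toAdditive (ψ.comp (MonoidHom.mulSingle (fun _ : Fin m => G) i)), by
          intro f a
          show Additive.ofMul (ψ (Pi.mulSingle i (f • a.toMul)))
              = f • Additive.ofMul (ψ (Pi.mulSingle i a.toMul))
          rw [← smul_mulSingle, hψ_smul]
          rfl⟩ with hkOf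
      have hzero : (∑ j, ((Fin.cons (-1) kOf : ∀ _ : Fin (m+1), ↥(fRing F G)) j).val
          (Additive.ofMul (x j))) = 0 := by
        rw [Fin.sum_univ_succ]
        simp only [Fin.cons_zero, Fin.cons_succ]
        have h1 : ((-1 : ↥(fRing F G))).val (Additive.ofMul (x 0))
            = - Additive.ofMul (x 0) := rfl
        have h2 : (∑ i : Fin m, (kOf i).val (Additive.ofMul (x i.succ)))
            = Additive.ofMul (x 0) := by
          have h3 : ∀ i : Fin m, (kOf i).val (Additive.ofMul (x i.succ))
              = Additive.ofMul (ψ (Pi.mulSingle i (x i.succ))) := fun i => rfl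
          rw [Finset.sum_congr rfl fun i _ => h3 i, ← ofMul_prod, ← map_prod]
          have hprod : (∏ i : Fin m, Pi.mulSingle (M := fun _ : Fin m => G) i (x i.succ))
              = x ∘ Fin.succ := Finset.univ_prod_mulSingle (x ∘ Fin.succ)
          rw [hprod]
          have h4 : σ (x ∘ Fin.succ) = x := hσ_eq x hxN
          rw [hψ_apply, h4]
        rw [h1, h2, neg_add_cancel]
      have hc0 := hrel (Fin.cons (-1) kOf) hzero 0
      rw [Fin.cons_zero] at hc0
      have h1 : (1 : ↥(fRing F G)) = 0 := by rwa [neg_eq_zero] at hc0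
      obtain ⟨g, hg⟩ := exists_ne (1 : G)
      have h2 := (fRing_zero_iff (1 : ↥(fRing F G))).1 h1 (Additive.ofMul g)
      exact hg (by simpa using h2)
    · -- H0 = ⊤ : N = ⊤
      rw [Subgroup.eq_top_iff']
      intro z
      have hb : π z ∈ N.map π := hπN ▸ Subgroup.mem_top _
      obtain ⟨n, hn, hnb⟩ := Subgroup.mem_map.1 hb
      have hsingle : z * n⁻¹ = Pi.mulSingle 0 ((z * n⁻¹) 0) := by
        funext j
        refine Fin.cases ?_ ?_ j
        · simp
        · intro i
          have hcoord : n i.succ = z i.succ := congrFun hnb i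
          rw [Pi.mulSingle_eq_of_ne (Fin.succ_ne_zero i)]
          simp [Pi.mul_apply, Pi.inv_apply, hcoord]
      have hmem : Pi.mulSingle (M := fun _ : Fin (m+1) => G) 0 ((z * n⁻¹) 0) ∈ N := by
        have h5 : (z * n⁻¹) 0 ∈ H0 := htop ▸ Subgroup.mem_top _
        rwa [hH0, Subgroup.mem_comap, hι_apply] at h5
      have h6 : z * n⁻¹ ∈ N := hsingle ▸ hmem
      have h7 := mul_mem h6 hn
      simpa using h7

end Induction

section Counting

variable {F G : Type*} [Group F] [CommGroup G] [MulDistribMulAction F G] [Finite G]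

theorem fRing_card_pow (hirr : IsIrreducibleFGroup F G) (𝔪 : ℕ)
    (hgen : ∃ x : Fin 𝔪 → G, normalFClosure F {x} = ⊤)
    (hnot : ¬ ∃ y : Fin (𝔪 + 1) → G, normalFClosure F {y} = ⊤) :
    Nat.card ↥(fRing F G) ^ 𝔪 = Nat.card G := by
  haveI hnt : Nontrivial G := hirr.1
  haveI : Nontrivial ↥(fRing F G) := fRing_nontrivial hirr.1
  haveI : NoZeroDivisors ↥(fRing F G) :=
    ⟨fun {a b} h => fRing_noZeroDivisors hirr a b h⟩
  haveI : IsDomain ↥(fRing F G) := NoZeroDivisors.to_isDomain _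
  letI : Fintype ↥(fRing F G) := Fintype.ofFinite _
  letI : DecidableEq ↥(fRing F G) := Classical.decEq _
  letI : DivisionRing ↥(fRing F G) := Fintype.divisionRingOfIsDomain _
  letI : Module ↥(fRing F G) (Additive G) := Module.compHom (Additive G) (fRing F G).subtype
  have hLI : ∀ (n : ℕ) (y : Fin n → G), FRel (F := F) n y ↔
      LinearIndependent ↥(fRing F G) (fun i => Additive.ofMul (y i)) := by
    intro n y
    rw [Fintype.linearIndependent_iff]
    exact ⟨fun h g hg => h g hg, fun h g hg => h g hg⟩
  -- 𝔪 ≤ finrank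
  obtain ⟨x, hx⟩ := hgen
  have li := (hLI 𝔪 x).1 (rel_of_closure_eq_top hx)
  have le1 : 𝔪 ≤ Module.finrank ↥(fRing F G) (Additive G) := by
    have := li.fintype_card_le_finrank
    simpa using this
  have le2 : Module.finrank ↥(fRing F G) (Additive G) ≤ 𝔪 := by
    by_contra hcon
    push_neg at hcon
    have h' : 𝔪 + 1 ≤ Module.finrank ↥(fRing F G) (Additive G) := hcon
    set b := Module.finBasis ↥(fRing F G) (Additive G)
    have li2 : LinearIndependent ↥(fRing F G)
        (fun i : Fin (𝔪+1) => b (Fin.castLE h' i)) :=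
      b.linearIndependent.comp _ (Fin.castLE_injective h')
    set y : Fin (𝔪+1) → G := fun i => (b (Fin.castLE h' i)).toMul with hy
    have li3 : LinearIndependent ↥(fRing F G) (fun i => Additive.ofMul (y i)) := li2
    exact hnot ⟨y, closure_eq_top_of_frel hirr _ y ((hLI _ y).2 li3)⟩
  have hdim : Module.finrank ↥(fRing F G) (Additive G) = 𝔪 := le_antisymm le2 le1
  letI : Fintype (Additive G) := Fintype.ofFinite _
  have hcard := Module.card_eq_pow_finrank (K := ↥(fRing F G)) (V := Additive G)
  rw [hdim] at hcard
  rw [Nat.card_eq_fintype_card, ← hcard]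
  rw [show Nat.card G = Nat.card (Additive G) from (Nat.card_congr Additive.ofMul)]
  rw [Nat.card_eq_fintype_card]

end Counting

theorem hF_pow_eq_card'
    {F G : Type*} [Group F] [Group G] [MulDistribMulAction F G] [Finite G]
    (hab : ∀ a b : G, a * b = b * a)
    (hirr : IsIrreducibleFGroup F G) (𝔪 : ℕ)
    (hgen : ∃ x : Fin 𝔪 → G, normalFClosure F {x} = ⊤)
    (hnot : ¬ ∃ y : Fin (𝔪 + 1) → G, normalFClosure F {y} = ⊤) :
    hF F G ^ 𝔪 = Nat.card G := by
  letI : CommGroup G := { ‹Group G› with mul_comm := hab }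
  have he : hF F G = Nat.card ↥(fRing F G) := by
    refine Nat.card_congr ⟨fun φ => ⟨MonoidHom.toAdditive φ.1, fun f a =>
        congrArg Additive.ofMul (φ.2 f a.toMul)⟩,
      fun k => ⟨MonoidHom.toAdditive.symm k.1, fun f x =>
        congrArg Additive.toMul (k.2 f (Additive.ofMul x))⟩, ?_, ?_⟩
    · intro φ; apply Subtype.ext; simp
    · intro k; apply Subtype.ext; exact MonoidHom.toAdditive.apply_symm_apply k.1
  rw [he]
  exact fRing_card_pow hirr 𝔪 hgen hnot

/-- if `𝔪` is the largest number such that `G^𝔪` can be generated by a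
single element as an `F`-group, then `h_F(G)^𝔪 = |G|`. -/
theorem hF_pow_eq_card
    {F G : Type*} [Group F] [Group G] [MulDistribMulAction F G] [Finite G]
    (hab : ∀ a b : G, a * b = b * a)
    (hirr : IsIrreducibleFGroup F G) (𝔪 : ℕ)
    (hgen : ∃ x : Fin 𝔪 → G, normalFClosure F {x} = ⊤)
    (hnot : ¬ ∃ y : Fin (𝔪 + 1) → G, normalFClosure F {y} = ⊤) :
    hF F G ^ 𝔪 = Nat.card G := by
  exact hF_pow_eq_card' hab hirr 𝔪 hgen hnot
end

section
/- Let F be a group, let G₁,…,G_m be irreducible F-groups, and let N be a subgroup of ∏_{i=1}^m G_i that is stable under the F-action and whose image under each coordinate projection is either the trivial subgroup or all of G_i. Then there exists a subset J ⊆ {1,…,m} such that the projection ∏_{i=1}^m G_i → ∏_{i∈J} G_i restricts to a group isomorphism from N onto ∏_{i∈J} G_i. -/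
section AuxKill

variable {m : ℕ}

/-- The monoid hom on a product that replaces coordinate `j` by `1`. -/
def killCoord (G : Fin m → Type*) [∀ i, Group (G i)] (j : Fin m) :
    (∀ i, G i) →* (∀ i, G i) where
  toFun x := fun i => if i = j then 1 else x i
  map_one' := by funext i; by_cases h : i = j <;> simp [h]
  map_mul' x y := by funext i; by_cases h : i = j <;> simp [h]

theorem subprod_aux {F : Type*} [Group F] {m : ℕ} (G : Fin m → Type*)
    [∀ i, Group (G i)] [∀ i, MulDistribMulAction F (G i)]
    (hirr : ∀ i, IsIrreducibleFGroup F (G i)) :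
    ∀ (n : ℕ) (S : Finset (Fin m)), S.card ≤ n →
      ∀ N : Subgroup (∀ i, G i),
        (∀ (f : F) (x : ∀ i, G i), x ∈ N → f • x ∈ N) →
        (∀ i, Subgroup.map (Pi.evalMonoidHom G i) N = ⊥ ∨
            Subgroup.map (Pi.evalMonoidHom G i) N = ⊤) →
        (∀ x ∈ N, ∀ i ∉ S, x i = 1) →
        ∃ J : Set (Fin m), J ⊆ (S : Set (Fin m)) ∧
          Function.Bijective (fun (x : N) (i : J) => (x : ∀ i, G i) i) := by
  classical
  have inj_of : ∀ (H : Subgroup (∀ i, G i)) (J : Set (Fin m)),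
      (∀ x : ∀ i, G i, x ∈ H → (∀ i ∈ J, x i = 1) → x = 1) →
      Function.Injective (fun (x : H) (i : J) => (x : ∀ i, G i) i) := by
    intro H J hH x y hxy
    have hxy' : ∀ i ∈ J, (x : ∀ i, G i) i = (y : ∀ i, G i) i :=
      fun i hi => congrFun hxy ⟨i, hi⟩
    have h1 : (x : ∀ i, G i) * (y : ∀ i, G i)⁻¹ = 1 :=
      hH _ (mul_mem x.2 (inv_mem y.2)) (fun i hi => by
        simp [Pi.mul_apply, Pi.inv_apply, hxy' i hi])
    exact Subtype.ext (mul_inv_eq_one.mp h1)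
  intro n
  induction n with
  | zero =>
    intro S hcard N hstab hproj hsupp
    have hS : S = ∅ := Finset.card_eq_zero.mp (Nat.le_zero.mp hcard)
    subst hS
    refine ⟨∅, by simp, ?_, ?_⟩
    · intro x y _
      have hx : (x : ∀ i, G i) = 1 := funext fun i => hsupp x x.2 i (by simp)
      have hy : (y : ∀ i, G i) = 1 := funext fun i => hsupp y y.2 i (by simp)
      exact Subtype.ext (hx.trans hy.symm)
    · intro h
      exact ⟨1, funext fun i => absurd i.2 (Set.notMem_empty _)⟩
  | succ n ih =>
    intro S hcard N hstab hproj hsupp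
    rcases S.eq_empty_or_nonempty with hS | ⟨j, hj⟩
    · subst hS
      refine ⟨∅, by simp, ?_, ?_⟩
      · intro x y _
        have hx : (x : ∀ i, G i) = 1 := funext fun i => hsupp x x.2 i (by simp)
        have hy : (y : ∀ i, G i) = 1 := funext fun i => hsupp y y.2 i (by simp)
        exact Subtype.ext (hx.trans hy.symm)
      · intro h
        exact ⟨1, funext fun i => absurd i.2 (Set.notMem_empty _)⟩
    · have hcard' : (S.erase j).card ≤ n := by
        have := Finset.card_erase_of_mem hj
        omega
      rcases hproj j with hbot | htop
      · -- projection at j is trivial: support shrinks to S.erase j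
        have hj1 : ∀ x ∈ N, x j = 1 := by
          intro x hx
          have hmem : x j ∈ Subgroup.map (Pi.evalMonoidHom G j) N :=
            ⟨x, hx, rfl⟩
          rw [hbot] at hmem
          simpa using hmem
        obtain ⟨J, hJsub, hbij⟩ := ih (S.erase j) hcard' N hstab hproj
          (fun x hx i hi => by
            by_cases h : i = j
            · subst h; exact hj1 x hx
            · exact hsupp x hx i (fun hiS => hi (Finset.mem_erase.2 ⟨h, hiS⟩)))
        exact ⟨J, hJsub.trans (Finset.coe_subset.2 (Finset.erase_subset j S)), hbij⟩
      · -- projection at j is everything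
        set q : (∀ i, G i) →* (∀ i, G i) := killCoord G j with hq
        have hqapp : ∀ (x : ∀ i, G i) (i : Fin m), q x i = if i = j then 1 else x i :=
          fun x i => rfl
        have hker : ∀ x : ∀ i, G i, x ∈ MonoidHom.ker q ↔ ∀ i, i ≠ j → x i = 1 := by
          intro x
          rw [MonoidHom.mem_ker]
          constructor
          · intro h i hi
            have := congrFun h i
            simpa [hqapp, hi] using this
          · intro h
            funext i
            by_cases hi : i = j
            · simp [hqapp, hi]
            · simp [hqapp, hi, h i hi]
        have hsurjGj : ∀ g : G j, ∃ x ∈ N, x j = g := by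
          intro g
          have : g ∈ Subgroup.map (Pi.evalMonoidHom G j) N := htop ▸ Subgroup.mem_top g
          rcases Subgroup.mem_map.1 this with ⟨x, hx, hxj⟩
          exact ⟨x, hx, hxj⟩
        have hqF : ∀ (f : F) (x : ∀ i, G i), q (f • x) = f • q x := by
          intro f x
          funext i
          by_cases h : i = j <;> simp [hqapp, h, Pi.smul_apply, smul_one]
        set N' : Subgroup (∀ i, G i) := Subgroup.map q N with hN'
        have hstab' : ∀ (f : F) (x : ∀ i, G i), x ∈ N' → f • x ∈ N' := by
          rintro f x ⟨y, hy, rfl⟩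
          exact ⟨f • y, hstab f y hy, hqF f y⟩
        have hproj' : ∀ i, Subgroup.map (Pi.evalMonoidHom G i) N' = ⊥ ∨
            Subgroup.map (Pi.evalMonoidHom G i) N' = ⊤ := by
          intro i
          by_cases h : i = j
          · subst h
            left
            rw [Subgroup.eq_bot_iff_forall]
            rintro g hg
            rcases Subgroup.mem_map.1 hg with ⟨x, hx, rfl⟩
            rcases Subgroup.mem_map.1 hx with ⟨y, hy, rfl⟩
            simp [hqapp]
          · have hcomp : (Pi.evalMonoidHom G i).comp q = Pi.evalMonoidHom G i := by
              ext x
              simp [hqapp, h]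
            rw [hN', Subgroup.map_map, hcomp]
            exact hproj i
        have hsupp' : ∀ x ∈ N', ∀ i ∉ S.erase j, x i = 1 := by
          rintro x ⟨y, hy, rfl⟩ i hi
          by_cases h : i = j
          · simp [hqapp, h]
          · have : i ∉ S := fun hiS => hi (Finset.mem_erase.2 ⟨h, hiS⟩)
            simp [hqapp, h, hsupp y hy i this]
        obtain ⟨J', hJ'sub, hinj', hsurj'⟩ :=
          ih (S.erase j) hcard' N' hstab' hproj' hsupp'
        have hjJ' : j ∉ J' := fun h =>
          (Finset.mem_erase.1 (Finset.mem_coe.1 (hJ'sub h))).1 rfl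
        have hN'triv : ∀ z ∈ N', (∀ i ∈ J', z i = 1) → z = 1 := by
          intro z hz hzi
          have h1 : (⟨z, hz⟩ : N') = 1 := hinj' (funext fun i => by
            simpa using hzi i.1 i.2)
          exact congrArg Subtype.val h1
        -- the subgroup M_j : image in G j of elements of N supported at j
        set Mj : Subgroup (G j) :=
          Subgroup.map (Pi.evalMonoidHom G j) (N ⊓ MonoidHom.ker q) with hMj
        have hMjnormal : Mj.Normal := by
          constructor
          intro g hg h
          rcases Subgroup.mem_map.1 hg with ⟨x, hx, rfl⟩
          rcases Subgroup.mem_inf.1 hx with ⟨hxN, hxker⟩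
          obtain ⟨y, hyN, hyj⟩ := hsurjGj h
          refine Subgroup.mem_map.2 ⟨y * x * y⁻¹,
            Subgroup.mem_inf.2 ⟨mul_mem (mul_mem hyN hxN) (inv_mem hyN), ?_⟩, ?_⟩
          · rw [hker] at hxker ⊢
            intro i hi
            simp [Pi.mul_apply, Pi.inv_apply, hxker i hi]
          · simp [Pi.mul_apply, Pi.inv_apply, hyj]
        have hMjF : ∀ (f : F) (g : G j), g ∈ Mj → f • g ∈ Mj := by
          intro f g hg
          rcases Subgroup.mem_map.1 hg with ⟨x, hx, rfl⟩
          rcases Subgroup.mem_inf.1 hx with ⟨hxN, hxker⟩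
          refine Subgroup.mem_map.2 ⟨f • x,
            Subgroup.mem_inf.2 ⟨hstab f x hxN, ?_⟩, rfl⟩
          rw [hker] at hxker ⊢
          intro i hi
          simp [Pi.smul_apply, hxker i hi]
        rcases (hirr j).2 Mj ⟨hMjnormal, hMjF⟩ with hMbot | hMtop
        · -- M_j = ⊥ : projection away from j is injective on N; J := J'
          have hMbot' : ∀ x ∈ N, (∀ i, i ≠ j → x i = 1) → x j = 1 := by
            intro x hx hxo
            have hmem : x j ∈ Mj :=
              Subgroup.mem_map.2 ⟨x, Subgroup.mem_inf.2 ⟨hx, (hker x).2 hxo⟩, rfl⟩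
            rw [hMbot] at hmem
            simpa using hmem
          refine ⟨J', hJ'sub.trans (Finset.coe_subset.2 (Finset.erase_subset j S)),
            inj_of N J' ?_, ?_⟩
          · intro x hx hxJ
            have hqx : q x = 1 := hN'triv (q x) ⟨x, hx, rfl⟩ (fun i hi => by
              have hij : i ≠ j := fun h => hjJ' (h ▸ hi)
              simp [hqapp, hij, hxJ i hi])
            have hoff : ∀ i, i ≠ j → x i = 1 := (hker x).1 hqx
            funext i
            by_cases h : i = j
            · subst h; exact hMbot' x hx hoff
            · exact hoff i h
          · intro h
            obtain ⟨y', hy'⟩ := hsurj' h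
            obtain ⟨y, hyN, hyq⟩ := Subgroup.mem_map.1 y'.2
            refine ⟨⟨y, hyN⟩, funext fun i => ?_⟩
            have hij : (i : Fin m) ≠ j := fun hh => hjJ' (hh ▸ i.2)
            have e1 : y i = (y' : ∀ i, G i) i := by
              rw [← hyq]; simp [hqapp, hij]
            have e2 : (y' : ∀ i, G i) i = h i := congrFun hy' i
            exact e1.trans e2
        · -- M_j = ⊤ : 1 × G j ⊆ N; J := insert j J'
          have hMtop' : ∀ g : G j, ∃ x ∈ N, x j = g ∧ ∀ i, i ≠ j → x i = 1 := by
            intro g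
            have : g ∈ Mj := hMtop ▸ Subgroup.mem_top g
            rcases Subgroup.mem_map.1 this with ⟨x, hx, rfl⟩
            rcases Subgroup.mem_inf.1 hx with ⟨hxN, hxker⟩
            exact ⟨x, hxN, rfl, (hker x).1 hxker⟩
          refine ⟨insert j J', Set.insert_subset_iff.2
            ⟨Finset.mem_coe.2 hj, hJ'sub.trans
              (Finset.coe_subset.2 (Finset.erase_subset j S))⟩,
            inj_of N _ ?_, ?_⟩
          · intro x hx hxJ
            have hqx : q x = 1 := hN'triv (q x) ⟨x, hx, rfl⟩ (fun i hi => by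
              have hij : i ≠ j := fun h => hjJ' (h ▸ hi)
              simp [hqapp, hij, hxJ i (Set.mem_insert_of_mem j hi)])
            have hoff : ∀ i, i ≠ j → x i = 1 := (hker x).1 hqx
            funext i
            by_cases h : i = j
            · subst h; exact hxJ i (Set.mem_insert _ _)
            · exact hoff i h
          · intro h
            obtain ⟨y', hy'⟩ := hsurj' (fun i => h ⟨i.1, Set.mem_insert_of_mem j i.2⟩)
            obtain ⟨y, hyN, hyq⟩ := Subgroup.mem_map.1 y'.2
            obtain ⟨z, hzN, hzj, hzoff⟩ :=
              hMtop' ((y j)⁻¹ * h ⟨j, Set.mem_insert _ _⟩)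
            refine ⟨⟨y * z, mul_mem hyN hzN⟩, funext fun i => ?_⟩
            rcases i with ⟨i, hi⟩
            by_cases hij : i = j
            · subst hij
              show (y * z) i = h ⟨i, hi⟩
              simp [Pi.mul_apply, hzj]
            · have hiJ' : i ∈ J' := (Set.mem_insert_iff.1 hi).resolve_left hij
              show (y * z) i = h ⟨i, hi⟩
              have e1 : y i = (y' : ∀ i, G i) i := by
                rw [← hyq]; simp [hqapp, hij]
              have e2 : (y' : ∀ i, G i) i = h ⟨i, Set.mem_insert_of_mem j hiJ'⟩ :=
                congrFun hy' ⟨i, hiJ'⟩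
              simp [Pi.mul_apply, hzoff i hij, e1, e2]

end AuxKill


/-- Lemma on subgroups of products of irreducible `F`-groups:
an `F`-stable subgroup of `∏ᵢ Gᵢ` projecting onto `1` or `Gᵢ` in each coordinate is
isomorphic, via a coordinate projection, to a subproduct. -/
theorem subgroup_of_product_proj_iso
    {F : Type*} [Group F] {m : ℕ} (G : Fin m → Type*)
    [∀ i, Group (G i)] [∀ i, MulDistribMulAction F (G i)]
    (hirr : ∀ i, IsIrreducibleFGroup F (G i))
    (N : Subgroup (∀ i, G i))
    (hstab : ∀ (f : F) (x : ∀ i, G i), x ∈ N → f • x ∈ N)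
    (hproj : ∀ i, Subgroup.map (Pi.evalMonoidHom G i) N = ⊥ ∨
        Subgroup.map (Pi.evalMonoidHom G i) N = ⊤) :
    ∃ (J : Set (Fin m)) (e : N ≃* (∀ i : J, G i)),
      ∀ (x : N) (i : J), e x i = (x : ∀ i, G i) i := by
  classical
  obtain ⟨J, -, hbij⟩ := subprod_aux G hirr Finset.univ.card Finset.univ le_rfl N
    hstab hproj (fun x hx i hi => absurd (Finset.mem_univ i) hi)
  exact ⟨J, MulEquiv.ofBijective
    ((Pi.monoidHom fun i : J => Pi.evalMonoidHom G i.1).comp N.subtype) hbij,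
    fun x i => rfl⟩
end

section
/- Let F be a group, let G₁,…,G_k be irreducible F-groups such that G_i and G_j are not isomorphic as F-groups for i ≠ j, let m₁,…,m_k be non-negative integers, and let N be a normal F-subgroup of ∏_{i=1}^k G_i^{m_i}. For each i, let N_i be the image of N under the projection onto the block G_i^{m_i}. Then each N_i is a normal F-subgroup of G_i^{m_i}, and N = ∏_{i=1}^k N_i; that is, an element of ∏_{i=1}^k G_i^{m_i} lies in N if and only if for every i its projection to the block G_i^{m_i} lies in N_i. -/
namespace S4Aux

open Classical

variable {F : Type*} [Group F] {k : ℕ} {G : Fin k → Type*}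
  [∀ i, Group (G i)] [∀ i, MulDistribMulAction F (G i)] {m : Fin k → ℕ}

/-- single-coordinate embedding -/
def ee (i : Fin k) (c : Fin (m i)) : G i →* ∀ j, Fin (m j) → G j :=
  (MonoidHom.mulSingle (fun j => Fin (m j) → G j) i).comp
    (MonoidHom.mulSingle (fun _ : Fin (m i) => G i) c)

lemma ee_apply_same (i : Fin k) (c : Fin (m i)) (g : G i) : ee (G := G) i c g i c = g := by
  simp [ee, MonoidHom.mulSingle_apply, Pi.mulSingle_eq_same]

lemma ee_apply_ne {i : Fin k} {c : Fin (m i)} (g : G i) {j : Fin k} {d : Fin (m j)}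
    (h : (⟨j, d⟩ : Σ j, Fin (m j)) ≠ ⟨i, c⟩) : ee (G := G) i c g j d = 1 := by
  rcases eq_or_ne j i with rfl | hj
  · have hd : d ≠ c := by
      intro hd; exact h (by rw [hd])
    simp [ee, MonoidHom.mulSingle_apply, Pi.mulSingle_eq_same, Pi.mulSingle_eq_of_ne hd]
  · simp [ee, MonoidHom.mulSingle_apply, Pi.mulSingle_eq_of_ne hj]

lemma smul_apply₂ (f : F) (x : ∀ j, Fin (m j) → G j) (j : Fin k) (d : Fin (m j)) :
    (f • x) j d = f • x j d := rfl

lemma smul_ee (f : F) (i : Fin k) (c : Fin (m i)) (g : G i) :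
    f • (ee (G := G) i c g) = ee i c (f • g) := by
  funext j d
  rcases eq_or_ne (⟨j, d⟩ : Σ j, Fin (m j)) ⟨i, c⟩ with h | h
  · obtain ⟨rfl, h2⟩ := Sigma.mk.inj_iff.mp h
    obtain rfl := eq_of_heq h2
    rw [smul_apply₂, ee_apply_same, ee_apply_same]
  · rw [smul_apply₂, ee_apply_ne g h, ee_apply_ne (f • g) h, smul_one]

/-- the subgroup of elements supported on a finite set of coordinates -/
def QQ (T : Finset (Σ j, Fin (m j))) : Subgroup (∀ j, Fin (m j) → G j) where
  carrier := {x | ∀ p : Σ j, Fin (m j), p ∉ T → x p.1 p.2 = 1}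
  one_mem' := fun _ _ => rfl
  mul_mem' := by
    intro a b ha hb p hp
    have := ha p hp; have := hb p hp
    show a p.1 p.2 * b p.1 p.2 = 1
    simp [*]
  inv_mem' := by
    intro a ha p hp
    show (a p.1 p.2)⁻¹ = 1
    simp [ha p hp]

lemma mem_QQ {T : Finset (Σ j, Fin (m j))} {x : ∀ j, Fin (m j) → G j} :
    x ∈ QQ T ↔ ∀ p : Σ j, Fin (m j), p ∉ T → x p.1 p.2 = 1 := Iff.rfl

lemma QQ_mono {T T' : Finset (Σ j, Fin (m j))} (h : T ⊆ T') : QQ (G := G) T ≤ QQ T' :=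
  fun x hx p hp => hx p (fun hc => hp (h hc))

lemma QQ_empty : QQ (G := G) (m := m) ∅ = ⊥ := by
  rw [eq_bot_iff]
  intro x hx
  have : x = 1 := funext fun j => funext fun d => hx ⟨j, d⟩ (Finset.notMem_empty _)
  simp [this]

lemma ee_mem_QQ {T : Finset (Σ j, Fin (m j))} {i : Fin k} {c : Fin (m i)} (g : G i)
    (h : (⟨i, c⟩ : Σ j, Fin (m j)) ∈ T) : ee (G := G) i c g ∈ QQ T := by
  intro p hp
  have : p ≠ ⟨i, c⟩ := fun hh => hp (hh ▸ h)
  exact ee_apply_ne g (by rcases p with ⟨a, b⟩; exact this)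

/-- F-stability of a subgroup -/
def FSt (H : Subgroup (∀ j, Fin (m j) → G j)) : Prop :=
  ∀ (f : F) (x), x ∈ H → f • x ∈ H

lemma FSt_QQ (T : Finset (Σ j, Fin (m j))) : FSt (F := F) (QQ (G := G) T) := by
  intro f x hx p hp
  rw [smul_apply₂, hx p hp, smul_one]

lemma FSt_inf {H K : Subgroup (∀ j, Fin (m j) → G j)} (hH : FSt (F := F) H)
    (hK : FSt (F := F) K) : FSt (F := F) (H ⊓ K) :=
  fun f x hx => ⟨hH f x hx.1, hK f x hx.2⟩

/-- restriction to a coordinate set, as a hom -/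
def rr (T : Finset (Σ j, Fin (m j))) : (∀ j, Fin (m j) → G j) →* (∀ j, Fin (m j) → G j) where
  toFun x := fun j d => if (⟨j, d⟩ : Σ j, Fin (m j)) ∈ T then x j d else 1
  map_one' := by funext j d; simp
  map_mul' x y := by
    funext j d
    by_cases h : (⟨j, d⟩ : Σ j, Fin (m j)) ∈ T <;> simp [h]

lemma rr_apply (T : Finset (Σ j, Fin (m j))) (x : ∀ j, Fin (m j) → G j) (j : Fin k)
    (d : Fin (m j)) : rr T x j d = if (⟨j, d⟩ : Σ j, Fin (m j)) ∈ T then x j d else 1 := rfl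

lemma rr_mem_QQ (T : Finset (Σ j, Fin (m j))) (x : ∀ j, Fin (m j) → G j) : rr T x ∈ QQ T := by
  intro p hp
  rcases p with ⟨j, d⟩
  rw [rr_apply, if_neg hp]

lemma rr_eq_self {T : Finset (Σ j, Fin (m j))} {x : ∀ j, Fin (m j) → G j} (hx : x ∈ QQ T) :
    rr T x = x := by
  funext j d
  rw [rr_apply]
  by_cases h : (⟨j, d⟩ : Σ j, Fin (m j)) ∈ T
  · rw [if_pos h]
  · rw [if_neg h, hx ⟨j, d⟩ h]

lemma rr_eq_one {T T' : Finset (Σ j, Fin (m j))} {x : ∀ j, Fin (m j) → G j} (hx : x ∈ QQ T')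
    (hdisj : ∀ p ∈ T, p ∉ T') : rr T x = 1 := by
  funext j d
  rw [rr_apply]
  by_cases h : (⟨j, d⟩ : Σ j, Fin (m j)) ∈ T
  · rw [if_pos h, hx _ (hdisj _ h)]; rfl
  · rw [if_neg h]; rfl

lemma smul_rr (f : F) (T : Finset (Σ j, Fin (m j))) (x : ∀ j, Fin (m j) → G j) :
    f • rr (G := G) T x = rr T (f • x) := by
  funext j d
  rw [smul_apply₂, rr_apply, rr_apply]
  by_cases h : (⟨j, d⟩ : Σ j, Fin (m j)) ∈ T
  · rw [if_pos h, if_pos h]; rfl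
  · rw [if_neg h, if_neg h, smul_one]

lemma FSt_map_rr {H : Subgroup (∀ j, Fin (m j) → G j)} (hH : FSt (F := F) H)
    (T : Finset (Σ j, Fin (m j))) : FSt (F := F) (H.map (rr T)) := by
  rintro f x ⟨y, hy, rfl⟩
  exact ⟨f • y, hH f y hy, (smul_rr f T y).symm⟩

lemma FSt_comap_rr {H : Subgroup (∀ j, Fin (m j) → G j)} (hH : FSt (F := F) H)
    (T : Finset (Σ j, Fin (m j))) : FSt (F := F) (H.comap (rr T)) := by
  intro f x hx
  have : rr T (f • x) ∈ H := by rw [← smul_rr]; exact hH f _ hx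
  exact this


/-- the block `i` is abelian -/
def AbBlock (G : Fin k → Type*) [∀ i, Group (G i)] (i : Fin k) : Prop :=
  ∀ a b : G i, a * b = b * a

/-- abelian coordinates -/
noncomputable def abS (G : Fin k → Type*) [∀ i, Group (G i)] (m : Fin k → ℕ) :
    Finset (Σ j, Fin (m j)) :=
  Finset.univ.filter (fun p => AbBlock G p.1)

lemma mem_abS {p : Σ j, Fin (m j)} : p ∈ abS G m ↔ AbBlock G p.1 := by
  simp [abS]

lemma central_of_mem_QQ_abS {T : Finset (Σ j, Fin (m j))} (hT : ∀ p ∈ T, AbBlock G p.1)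
    {x : ∀ j, Fin (m j) → G j} (hx : x ∈ QQ T) (y : ∀ j, Fin (m j) → G j) :
    x * y = y * x := by
  funext j d
  show x j d * y j d = y j d * x j d
  by_cases h : (⟨j, d⟩ : Σ j, Fin (m j)) ∈ T
  · exact hT _ h _ _
  · rw [hx _ h, one_mul, mul_one]

lemma normal_of_le_QQ_ab {T : Finset (Σ j, Fin (m j))} (hT : ∀ p ∈ T, AbBlock G p.1)
    {H : Subgroup (∀ j, Fin (m j) → G j)} (hH : H ≤ QQ T) : H.Normal := by
  constructor
  intro n hn g
  rw [← central_of_mem_QQ_abS hT (hH hn) g, mul_assoc, mul_inv_cancel, mul_one]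
  exact hn

lemma exists_mul_of_mem_sup {X Y : Subgroup (∀ j, Fin (m j) → G j)} (hY : Y.Normal)
    {z : ∀ j, Fin (m j) → G j} (hz : z ∈ X ⊔ Y) : ∃ x ∈ X, ∃ y ∈ Y, z = x * y := by
  have : z ∈ (↑(X ⊔ Y) : Set _) := hz
  rw [Subgroup.mul_normal] at this
  obtain ⟨x, hx, y, hy, hxy⟩ := this
  exact ⟨x, hx, y, hy, hxy.symm⟩

lemma FSt_sup {X Y : Subgroup (∀ j, Fin (m j) → G j)} (hX : FSt (F := F) X)
    (hY : FSt (F := F) Y) (hYn : Y.Normal) : FSt (F := F) (X ⊔ Y) := by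
  intro f z hz
  obtain ⟨x, hx, y, hy, rfl⟩ := exists_mul_of_mem_sup hYn hz
  rw [smul_mul']
  exact mul_mem (Subgroup.mem_sup_left (hX f x hx)) (Subgroup.mem_sup_right (hY f y hy))

lemma rr_insert {T : Finset (Σ j, Fin (m j))} {p : Σ j, Fin (m j)} (hp : p ∉ T)
    (x : ∀ j, Fin (m j) → G j) :
    rr (insert p T) x = ee p.1 p.2 (x p.1 p.2) * rr T x := by
  funext j d
  show _ = ee p.1 p.2 (x p.1 p.2) j d * rr T x j d
  rcases eq_or_ne (⟨j, d⟩ : Σ j, Fin (m j)) p with h | h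
  · rcases p with ⟨i, c⟩
    obtain ⟨rfl, h2⟩ := Sigma.mk.inj_iff.mp h
    obtain rfl := eq_of_heq h2
    rw [rr_apply, if_pos (Finset.mem_insert_self _ _), ee_apply_same, rr_apply, if_neg hp,
      mul_one]
  · rcases p with ⟨i, c⟩
    rw [rr_apply, rr_apply, ee_apply_ne _ h, one_mul]
    have : ¬ (⟨j, d⟩ : Σ j, Fin (m j)) = ⟨i, c⟩ := h
    simp [Finset.mem_insert, this]

/-- if all single-coordinate parts of `x` over `U` lie in `H`, then so does the
restriction of `x` to `U` -/
lemma rr_mem_of_single_mem (H : Subgroup (∀ j, Fin (m j) → G j)) (x : ∀ j, Fin (m j) → G j)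
    (U : Finset (Σ j, Fin (m j))) (h : ∀ p ∈ U, ee p.1 p.2 (x p.1 p.2) ∈ H) :
    rr U x ∈ H := by
  classical
  induction U using Finset.induction_on with
  | empty =>
    have : rr (G := G) (∅ : Finset (Σ j, Fin (m j))) x = 1 := by
      funext j d
      rw [rr_apply, if_neg (Finset.notMem_empty _)]; rfl
    rw [this]; exact one_mem H
  | @insert p T hp ih =>
    rw [rr_insert hp]
    exact mul_mem (h p (Finset.mem_insert_self _ _))
      (ih fun q hq => h q (Finset.mem_insert_of_mem hq))

lemma isNormalF_of_subgroup_ab {i : Fin k} (hab : AbBlock G i) (K : Subgroup (G i))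
    (hK : ∀ (f : F) (x : G i), x ∈ K → f • x ∈ K) : IsNormalFSubgroup F K := by
  refine ⟨⟨fun n hn g => ?_⟩, hK⟩
  have : g * n * g⁻¹ = n := by rw [hab g n, mul_assoc, mul_inv_cancel, mul_one]
  rw [this]; exact hn

/-- existence of coordinate-subproduct complements for `F`-stable subgroups supported
on abelian coordinates -/
lemma exists_compl (hirr : ∀ i, IsIrreducibleFGroup F (G i))
    (U : Finset (Σ j, Fin (m j))) (hU : ∀ p ∈ U, AbBlock G p.1)
    (X : Subgroup (∀ j, Fin (m j) → G j)) (hXst : FSt (F := F) X) (hXU : X ≤ QQ U) :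
    ∃ T ⊆ U, X ⊓ QQ T = ⊥ ∧ X ⊔ QQ T = QQ U := by
  classical
  set S := U.powerset.filter (fun T => X ⊓ QQ T = ⊥) with hS
  have hSne : S.Nonempty := by
    refine ⟨∅, Finset.mem_filter.mpr ⟨Finset.mem_powerset.mpr (Finset.empty_subset _), ?_⟩⟩
    rw [QQ_empty, inf_bot_eq]
  obtain ⟨T, hTS, hmax⟩ := Finset.exists_max_image S Finset.card hSne
  have hT : T ⊆ U := Finset.mem_powerset.mp (Finset.mem_filter.mp hTS).1
  have hTbot : X ⊓ QQ T = ⊥ := (Finset.mem_filter.mp hTS).2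
  have hQQTnormal : (QQ (G := G) T).Normal :=
    normal_of_le_QQ_ab (fun p hp => hU p (hT hp)) (le_refl _)
  have hsupst : FSt (F := F) (X ⊔ QQ T) := FSt_sup hXst (FSt_QQ T) hQQTnormal
  refine ⟨T, hT, hTbot, ?_⟩
  have key : ∀ p ∈ U, ∀ g : G p.1, ee p.1 p.2 g ∈ X ⊔ QQ T := by
    intro p hp g
    by_cases hpT : p ∈ T
    · exact Subgroup.mem_sup_right (ee_mem_QQ g hpT)
    set Kp := (X ⊔ QQ T).comap (ee p.1 p.2) with hKp
    have hKpN : IsNormalFSubgroup F Kp := by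
      refine isNormalF_of_subgroup_ab (hU p hp) _ (fun f x hx => ?_)
      show ee p.1 p.2 (f • x) ∈ X ⊔ QQ T
      rw [← smul_ee]
      exact hsupst f _ hx
    rcases (hirr p.1).2 Kp hKpN with hbot | htop
    · exfalso
      have hins : X ⊓ QQ (insert p T) = ⊥ := by
        rw [eq_bot_iff]
        rintro x ⟨hxX, hxQ⟩
        have h2 : x = ee p.1 p.2 (x p.1 p.2) * rr T x := by
          rw [← rr_insert hpT, rr_eq_self hxQ]
        have h3 : ee p.1 p.2 (x p.1 p.2) ∈ X ⊔ QQ T := by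
          have : ee p.1 p.2 (x p.1 p.2) = x * (rr T x)⁻¹ :=
            eq_mul_inv_of_mul_eq h2.symm
          rw [this]
          exact mul_mem (Subgroup.mem_sup_left hxX)
            (inv_mem (Subgroup.mem_sup_right (rr_mem_QQ T x)))
        have hx1 : x p.1 p.2 = 1 := by
          have : x p.1 p.2 ∈ Kp := h3
          rw [hbot] at this
          exact this
        have hxT : x ∈ QQ T := by
          intro q hq
          rcases eq_or_ne q p with rfl | hne
          · exact hx1
          · exact hxQ q (by
              rw [Finset.mem_insert]
              push_neg
              exact ⟨hne, hq⟩)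
        have : x ∈ X ⊓ QQ T := ⟨hxX, hxT⟩
        rw [hTbot] at this
        exact this
      have hins' : insert p T ∈ S := by
        rw [hS, Finset.mem_filter, Finset.mem_powerset]
        exact ⟨Finset.insert_subset hp hT, hins⟩
      have := hmax _ hins'
      rw [Finset.card_insert_of_notMem hpT] at this
      omega
    · have : g ∈ Kp := htop ▸ Subgroup.mem_top g
      exact this
  apply le_antisymm
  · exact sup_le hXU (QQ_mono hT)
  · intro x hxU
    rw [← rr_eq_self hxU]
    exact rr_mem_of_single_mem _ x U (fun p hp => key p hp _)

/-- every nontrivial `F`-stable subgroup supported on `U` contains a nontrivial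
`F`-stable subgroup on which some coordinate evaluation is injective -/
lemma exists_simple (U : Finset (Σ j, Fin (m j))) :
    ∀ (X : Subgroup (∀ j, Fin (m j) → G j)), FSt (F := F) X → X ≤ QQ U → X ≠ ⊥ →
    ∃ p ∈ U, ∃ S : Subgroup (∀ j, Fin (m j) → G j), S ≤ X ∧ FSt (F := F) S ∧ S ≠ ⊥ ∧
      ∀ z ∈ S, z p.1 p.2 = 1 → z = 1 := by
  classical
  induction U using Finset.strongInduction with
  | _ U ih =>
    intro X hXst hXU hXne
    have : ∃ x ∈ X, x ≠ 1 := by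
      by_contra h
      push_neg at h
      exact hXne ((Subgroup.eq_bot_iff_forall X).mpr h)
    obtain ⟨x, hxX, hx1⟩ := this
    have : ∃ p : Σ j, Fin (m j), x p.1 p.2 ≠ 1 := by
      by_contra h
      push_neg at h
      exact hx1 (funext fun j => funext fun d => h ⟨j, d⟩)
    obtain ⟨p, hp⟩ := this
    have hpU : p ∈ U := by
      by_contra hpU
      exact hp (hXU hxX p hpU)
    by_cases hX' : X ⊓ QQ (U.erase p) = ⊥
    · refine ⟨p, hpU, X, le_refl X, hXst, hXne, fun z hz hzp => ?_⟩
      have hq : z ∈ QQ (U.erase p) := by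
        intro q hq
        rcases eq_or_ne q p with rfl | hne
        · exact hzp
        · exact hXU hz q (fun hqU => hq (Finset.mem_erase.mpr ⟨hne, hqU⟩))
      have : z ∈ X ⊓ QQ (U.erase p) := ⟨hz, hq⟩
      rw [hX'] at this
      exact this
    · obtain ⟨p', hp', S, hSle, hSst, hSne, hSinj⟩ :=
        ih (U.erase p) (Finset.erase_ssubset hpU) _
          (FSt_inf hXst (FSt_QQ _)) inf_le_right hX'
      exact ⟨p', Finset.erase_subset _ _ hp', S, hSle.trans inf_le_left, hSst, hSne, hSinj⟩

lemma center_eq_bot (hirr : ∀ i, IsIrreducibleFGroup F (G i)) {i : Fin k}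
    (hna : ¬ AbBlock G i) : Subgroup.center (G i) = ⊥ := by
  have hst : ∀ (f : F) (z : G i), z ∈ Subgroup.center (G i) → f • z ∈ Subgroup.center (G i) := by
    intro f z hz
    rw [Subgroup.mem_center_iff] at hz ⊢
    intro y
    calc y * f • z = f • (f⁻¹ • y) * f • z := by rw [smul_inv_smul]
    _ = f • ((f⁻¹ • y) * z) := by rw [smul_mul']
    _ = f • (z * (f⁻¹ • y)) := by rw [hz]
    _ = f • z * f • (f⁻¹ • y) := by rw [smul_mul']
    _ = f • z * y := by rw [smul_inv_smul]
  rcases (hirr i).2 (Subgroup.center (G i)) ⟨inferInstance, hst⟩ with h | h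
  · exact h
  · exfalso
    apply hna
    intro a b
    have : a ∈ Subgroup.center (G i) := h ▸ Subgroup.mem_top a
    exact (Subgroup.mem_center_iff.mp this b).symm

variable (F) in
lemma single_mem_of_nonab (hirr : ∀ i, IsIrreducibleFGroup F (G i))
    (N : Subgroup (∀ j, Fin (m j) → G j)) (hN : IsNormalFSubgroup F N)
    {i : Fin k} (hna : ¬ AbBlock G i) {x : ∀ j, Fin (m j) → G j} (hx : x ∈ N)
    (c : Fin (m i)) : ee i c (x i c) ∈ N := by
  by_cases hxc : x i c = 1
  · rw [hxc, map_one]; exact one_mem N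
  set K := N.comap (ee (G := G) i c) with hK
  have hKN : IsNormalFSubgroup F K := by
    constructor
    · constructor
      intro n hn g
      show ee i c (g * n * g⁻¹) ∈ N
      rw [map_mul, map_mul, map_inv]
      exact hN.1.conj_mem _ hn _
    · intro f g hg
      show ee i c (f • g) ∈ N
      rw [← smul_ee]
      exact hN.2 f _ hg
  rcases (hirr i).2 K hKN with hbot | htop
  · exfalso
    have hZ : x i c ∉ Subgroup.center (G i) := by
      rw [center_eq_bot hirr hna]
      simpa [Subgroup.mem_bot] using hxc
    rw [Subgroup.mem_center_iff] at hZ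
    push_neg at hZ
    obtain ⟨z, hz⟩ := hZ
    set t := (x i c)⁻¹ * (z * x i c * z⁻¹) with hdeft
    have ht1 : t ≠ 1 := by
      intro h
      apply hz
      have h2 : z * x i c * z⁻¹ = x i c := (inv_mul_eq_one.mp h).symm
      calc z * x i c = z * x i c * z⁻¹ * z := by group
      _ = x i c * z := by rw [h2]
    have ht : t ∈ K := by
      have hu : x⁻¹ * (ee i c z * x * (ee i c z)⁻¹) ∈ N :=
        mul_mem (inv_mem hx) (hN.1.conj_mem x hx (ee i c z))
      have heq : x⁻¹ * (ee i c z * x * (ee i c z)⁻¹) = ee i c t := by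
        funext j d
        show (x j d)⁻¹ * (ee i c z j d * x j d * (ee i c z j d)⁻¹) = ee i c t j d
        rcases eq_or_ne (⟨j, d⟩ : Σ j, Fin (m j)) ⟨i, c⟩ with h | h
        · obtain ⟨rfl, h2⟩ := Sigma.mk.inj_iff.mp h
          obtain rfl := eq_of_heq h2
          rw [ee_apply_same, ee_apply_same, hdeft, mul_assoc]
        · rw [ee_apply_ne z h, ee_apply_ne t h]
          simp
      rw [heq] at hu
      exact hu
    rw [hbot] at ht
    exact ht1 ht
  · have : x i c ∈ K := htop ▸ Subgroup.mem_top _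
    exact this

lemma mulSingle_block_mem (N : Subgroup (∀ j, Fin (m j) → G j)) (x : ∀ j, Fin (m j) → G j)
    (i : Fin k) (h : ∀ c, ee i c (x i c) ∈ N) : Pi.mulSingle i (x i) ∈ N := by
  classical
  have main : ∀ t : Finset (Fin (m i)),
      Pi.mulSingle i (fun c => if c ∈ t then x i c else 1) ∈ N := by
    intro t
    induction t using Finset.induction_on with
    | empty =>
      have : (fun c => if c ∈ (∅ : Finset (Fin (m i))) then x i c else 1)
          = (1 : Fin (m i) → G i) := by funext c; simp
      rw [this, Pi.mulSingle_one]
      exact one_mem N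
    | @insert a t ha ih =>
      have heq : Pi.mulSingle i (fun c => if c ∈ insert a t then x i c else 1)
          = ee i a (x i a) * Pi.mulSingle i (fun c => if c ∈ t then x i c else 1) := by
        funext j d
        show Pi.mulSingle (M := fun j => Fin (m j) → G j) i
            (fun c => if c ∈ insert a t then x i c else 1) j d
          = ee i a (x i a) j d * Pi.mulSingle (M := fun j => Fin (m j) → G j) i
            (fun c => if c ∈ t then x i c else 1) j d
        rcases eq_or_ne j i with rfl | hj
        · rw [Pi.mulSingle_eq_same, Pi.mulSingle_eq_same]
          rcases eq_or_ne d a with rfl | hd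
          · rw [ee_apply_same, if_pos (Finset.mem_insert_self _ _), if_neg ha, mul_one]
          · rw [ee_apply_ne _ (by simp [hd]), one_mul]
            simp [Finset.mem_insert, hd]
        · rw [Pi.mulSingle_eq_of_ne hj, Pi.mulSingle_eq_of_ne hj,
            ee_apply_ne _ (by simp [hj])]
          show (1 : G j) = 1 * (1 : Fin (m j) → G j) d
          simp
      rw [heq]
      exact mul_mem (h a) ih
  have := main Finset.univ
  have heq : (fun c => if c ∈ (Finset.univ : Finset (Fin (m i))) then x i c else 1) = x i := by
    funext c; simp
  rwa [heq] at this

lemma mem_of_blocks (N : Subgroup (∀ j, Fin (m j) → G j)) (x : ∀ j, Fin (m j) → G j)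
    (h : ∀ j, Pi.mulSingle j (x j) ∈ N) : x ∈ N := by
  classical
  have main : ∀ t : Finset (Fin k), (fun j => if j ∈ t then x j else 1) ∈ N := by
    intro t
    induction t using Finset.induction_on with
    | empty =>
      have : (fun j => if j ∈ (∅ : Finset (Fin k)) then x j else 1)
          = (1 : ∀ j, Fin (m j) → G j) := by funext j; simp
      rw [this]; exact one_mem N
    | @insert a t ha ih =>
      have heq : (fun j => if j ∈ insert a t then x j else 1)
          = Pi.mulSingle a (x a) * (fun j => if j ∈ t then x j else 1) := by
        funext j
        show (if j ∈ insert a t then x j else 1)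
          = Pi.mulSingle (M := fun j => Fin (m j) → G j) a (x a) j * (if j ∈ t then x j else 1)
        rcases eq_or_ne j a with rfl | hj
        · rw [Pi.mulSingle_eq_same, if_pos (Finset.mem_insert_self _ _), if_neg ha, mul_one]
        · rw [Pi.mulSingle_eq_of_ne hj, one_mul]
          simp [Finset.mem_insert, hj]
      rw [heq]
      exact mul_mem (h a) ih
  have := main Finset.univ
  have heq : (fun j => if j ∈ (Finset.univ : Finset (Fin k)) then x j else 1) = x := by
    funext j; simp
  rwa [heq] at this

variable (F) in
lemma exists_ab_part (hirr : ∀ i, IsIrreducibleFGroup F (G i))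
    (N : Subgroup (∀ j, Fin (m j) → G j)) (hN : IsNormalFSubgroup F N)
    {x : ∀ j, Fin (m j) → G j} (hx : x ∈ N) :
    ∃ y ∈ N, y ∈ QQ (abS G m) ∧ ∀ i, AbBlock G i → y i = x i := by
  classical
  have main : ∀ t : Finset (Fin k), ∃ y ∈ N, (∀ j ∈ t, ¬ AbBlock G j → y j = 1) ∧
      ∀ j, (AbBlock G j ∨ j ∉ t) → y j = x j := by
    intro t
    induction t using Finset.induction_on with
    | empty => exact ⟨x, hx, by simp, fun j _ => rfl⟩
    | @insert a t ha ih =>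
      obtain ⟨y, hyN, h1, h2⟩ := ih
      by_cases hab : AbBlock G a
      · refine ⟨y, hyN, fun j hj hnab => ?_, fun j hj => ?_⟩
        · rcases Finset.mem_insert.mp hj with rfl | hj'
          · exact absurd hab hnab
          · exact h1 j hj' hnab
        · rcases hj with hj | hj
          · exact h2 j (Or.inl hj)
          · exact h2 j (Or.inr (fun hjt => hj (Finset.mem_insert_of_mem hjt)))
      · have hm : Pi.mulSingle a (y a) ∈ N :=
          mulSingle_block_mem N y a (fun c => single_mem_of_nonab F hirr N hN hab hyN c)
        refine ⟨y * (Pi.mulSingle a (y a))⁻¹, mul_mem hyN (inv_mem hm), ?_, ?_⟩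
        · intro j hj hnab
          rcases Finset.mem_insert.mp hj with rfl | hj'
          · show y j * ((Pi.mulSingle (M := fun j => Fin (m j) → G j) j (y j))⁻¹) j = 1
            show y j * (Pi.mulSingle (M := fun j => Fin (m j) → G j) j (y j) j)⁻¹ = 1
            rw [Pi.mulSingle_eq_same, mul_inv_cancel]
          · have hja : j ≠ a := fun h => ha (h ▸ hj')
            show y j * (Pi.mulSingle (M := fun j => Fin (m j) → G j) a (y a) j)⁻¹ = 1
            rw [Pi.mulSingle_eq_of_ne hja, inv_one, mul_one]
            exact h1 j hj' hnab
        · intro j hj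
          have hja : j ≠ a := by
            rcases hj with hj | hj
            · exact fun h => hab (h ▸ hj)
            · exact fun h => hj (h ▸ Finset.mem_insert_self a t)
          show y j * (Pi.mulSingle (M := fun j => Fin (m j) → G j) a (y a) j)⁻¹ = x j
          rw [Pi.mulSingle_eq_of_ne hja, inv_one, mul_one]
          rcases hj with hj | hj
          · exact h2 j (Or.inl hj)
          · exact h2 j (Or.inr (fun hjt => hj (Finset.mem_insert_of_mem hjt)))
  obtain ⟨y, hyN, h1, h2⟩ := main Finset.univ
  refine ⟨y, hyN, ?_, fun i hi => h2 i (Or.inl hi)⟩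
  intro p hp
  have : ¬ AbBlock G p.1 := fun h => hp (mem_abS.mpr h)
  rw [h1 p.1 (Finset.mem_univ _) this]
  rfl

variable (F) in
lemma abelian_case (hirr : ∀ i, IsIrreducibleFGroup F (G i))
    (hnoniso : ∀ i j, i ≠ j → ¬ IsFIso F (G i) (G j))
    (N : Subgroup (∀ j, Fin (m j) → G j)) (hN : IsNormalFSubgroup F N)
    {i : Fin k} (hab : AbBlock G i) {x : ∀ j, Fin (m j) → G j} (hx : x ∈ N)
    (hxV : x ∈ QQ (abS G m)) : Pi.mulSingle i (x i) ∈ N := by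
  classical
  set TA : Finset (Σ j, Fin (m j)) := (abS G m).filter (fun p => p.1 = i) with hTA
  set TB : Finset (Σ j, Fin (m j)) := (abS G m).filter (fun p => p.1 ≠ i) with hTB
  have hTA_ab : ∀ p ∈ TA, AbBlock G p.1 := fun p hp => mem_abS.mp (Finset.mem_filter.mp hp).1
  have hTB_ab : ∀ p ∈ TB, AbBlock G p.1 := fun p hp => mem_abS.mp (Finset.mem_filter.mp hp).1
  have hTAi : ∀ p ∈ TA, p.1 = i := fun p hp => (Finset.mem_filter.mp hp).2
  have hTBi : ∀ p ∈ TB, p.1 ≠ i := fun p hp => (Finset.mem_filter.mp hp).2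
  have hdisj : ∀ p ∈ TA, p ∉ TB := fun p hp hp' => hTBi p hp' (hTAi p hp)
  have hcover : ∀ p : Σ j, Fin (m j), p ∉ TA → p ∉ TB → p ∉ abS G m := by
    intro p h1 h2 habs
    rcases eq_or_ne p.1 i with h | h
    · exact h1 (Finset.mem_filter.mpr ⟨habs, h⟩)
    · exact h2 (Finset.mem_filter.mpr ⟨habs, h⟩)
  set W : Subgroup (∀ j, Fin (m j) → G j) := N ⊓ QQ (abS G m) with hW
  have hWst : FSt (F := F) W := FSt_inf hN.2 (FSt_QQ _)
  have hWab : W ≤ QQ (abS G m) := inf_le_right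
  set KA : Subgroup (∀ j, Fin (m j) → G j) := W ⊓ QQ TA with hKA
  set KB : Subgroup (∀ j, Fin (m j) → G j) := W ⊓ QQ TB with hKB
  obtain ⟨T₁, hT₁sub, h1b, h1s⟩ :=
    exists_compl hirr TA hTA_ab KA (FSt_inf hWst (FSt_QQ _)) inf_le_right
  obtain ⟨T₂, hT₂sub, h2b, h2s⟩ :=
    exists_compl hirr TB hTB_ab KB (FSt_inf hWst (FSt_QQ _)) inf_le_right
  set PA : Subgroup (∀ j, Fin (m j) → G j) := W.map (rr TA) with hPA
  have hPAst : FSt (F := F) PA := FSt_map_rr hWst TA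
  have hPA_le : PA ≤ QQ TA := by rintro _ ⟨w, hw, rfl⟩; exact rr_mem_QQ TA w
  set C : Subgroup (∀ j, Fin (m j) → G j) := PA ⊓ QQ T₁ with hCdef
  have hQQT₁n : (QQ (G := G) T₁).Normal :=
    normal_of_le_QQ_ab (fun p hp => hTA_ab p (hT₁sub hp)) (le_refl _)
  have hQQT₂n : (QQ (G := G) T₂).Normal :=
    normal_of_le_QQ_ab (fun p hp => hTB_ab p (hT₂sub hp)) (le_refl _)
  have hdecomp : ∀ z ∈ PA, ∃ u ∈ KA, ∃ c ∈ C, z = u * c := by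
    intro z hz
    have hz' : z ∈ KA ⊔ QQ T₁ := h1s ▸ hPA_le hz
    obtain ⟨u, hu, c, hc, rfl⟩ := exists_mul_of_mem_sup hQQT₁n hz'
    have hu_PA : u ∈ PA := ⟨u, hu.1, rr_eq_self hu.2⟩
    have hceq : c = u⁻¹ * (u * c) := by group
    have hcPA : c ∈ PA := by rw [hceq]; exact mul_mem (inv_mem hu_PA) hz
    exact ⟨u, hu, c, ⟨hcPA, hc⟩, rfl⟩
  by_cases hCbot : C = ⊥
  · have hxW : x ∈ W := ⟨hx, hxV⟩
    have hrrPA : rr TA x ∈ PA := ⟨x, hxW, rfl⟩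
    obtain ⟨u, hu, c, hc, heq⟩ := hdecomp _ hrrPA
    have hc1 : c = 1 := by rw [hCbot] at hc; exact hc
    have hmem : rr TA x ∈ N := by rw [heq, hc1, mul_one]; exact hu.1.1
    have hrrx : rr TA x = Pi.mulSingle i (x i) := by
      funext j e
      rw [rr_apply]
      rcases eq_or_ne j i with rfl | hj
      · have hmemTA : (⟨j, e⟩ : Σ j, Fin (m j)) ∈ TA :=
          Finset.mem_filter.mpr ⟨mem_abS.mpr hab, rfl⟩
        rw [if_pos hmemTA, Pi.mulSingle_eq_same]
      · rw [if_neg (fun h => hj (hTAi _ h)), Pi.mulSingle_eq_of_ne hj]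
        rfl
    rwa [hrrx] at hmem
  · exfalso
    set Γ : Subgroup (∀ j, Fin (m j) → G j) := W ⊓ QQ (T₁ ∪ T₂) with hΓ
    have hΓst : FSt (F := F) Γ := FSt_inf hWst (FSt_QQ _)
    have splitAB : ∀ w : ∀ j, Fin (m j) → G j, w ∈ QQ (abS G m) → w = rr TA w * rr TB w := by
      intro w hw
      funext j e
      show w j e = rr TA w j e * rr TB w j e
      rw [rr_apply, rr_apply]
      by_cases h1 : (⟨j, e⟩ : Σ j, Fin (m j)) ∈ TA
      · rw [if_pos h1, if_neg (hdisj _ h1), mul_one]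
      · rw [if_neg h1]
        by_cases h2 : (⟨j, e⟩ : Σ j, Fin (m j)) ∈ TB
        · rw [if_pos h2, one_mul]
        · rw [if_neg h2, hw _ (hcover _ h1 h2), mul_one]
    have hrrTA_T₁ : ∀ z : ∀ j, Fin (m j) → G j, z ∈ QQ (T₁ ∪ T₂) → rr TA z ∈ QQ T₁ := by
      intro z hz q hq
      rcases q with ⟨j, e⟩
      rw [rr_apply]
      by_cases h1 : (⟨j, e⟩ : Σ j, Fin (m j)) ∈ TA
      · rw [if_pos h1]
        refine hz _ (fun hu => ?_)
        rcases Finset.mem_union.mp hu with h | h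
        · exact hq h
        · exact hdisj _ h1 (hT₂sub h)
      · rw [if_neg h1]
    have hrrTB_T₂ : ∀ z : ∀ j, Fin (m j) → G j, z ∈ QQ (T₁ ∪ T₂) → rr TB z ∈ QQ T₂ := by
      intro z hz q hq
      rcases q with ⟨j, e⟩
      rw [rr_apply]
      by_cases h1 : (⟨j, e⟩ : Σ j, Fin (m j)) ∈ TB
      · rw [if_pos h1]
        refine hz _ (fun hu => ?_)
        rcases Finset.mem_union.mp hu with h | h
        · exact hdisj _ (hT₁sub h) h1
        · exact hq h
      · rw [if_neg h1]
    have injA : ∀ z ∈ Γ, rr TA z = 1 → z = 1 := by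
      intro z hz h1
      have hzT₂ : z ∈ QQ T₂ := by
        intro q hq
        by_cases hqu : q ∈ T₁ ∪ T₂
        · rcases Finset.mem_union.mp hqu with h | h
          · have : rr TA z q.1 q.2 = 1 := by rw [h1]; rfl
            rwa [rr_apply, if_pos (hT₁sub h)] at this
          · exact absurd h hq
        · exact hz.2 _ hqu
      have : z ∈ KB ⊓ QQ T₂ := ⟨⟨hz.1, QQ_mono hT₂sub hzT₂⟩, hzT₂⟩
      rw [h2b] at this
      exact this
    have injB : ∀ z ∈ Γ, rr TB z = 1 → z = 1 := by
      intro z hz h1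
      have hzT₁ : z ∈ QQ T₁ := by
        intro q hq
        by_cases hqu : q ∈ T₁ ∪ T₂
        · rcases Finset.mem_union.mp hqu with h | h
          · exact absurd h hq
          · have : rr TB z q.1 q.2 = 1 := by rw [h1]; rfl
            rwa [rr_apply, if_pos (hT₂sub h)] at this
        · exact hz.2 _ hqu
      have : z ∈ KA ⊓ QQ T₁ := ⟨⟨hz.1, QQ_mono hT₁sub hzT₁⟩, hzT₁⟩
      rw [h1b] at this
      exact this
    have hmapΓ : Subgroup.map (rr TA) Γ = C := by
      apply le_antisymm
      · rintro _ ⟨z, hz, rfl⟩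
        exact ⟨⟨z, hz.1, rfl⟩, hrrTA_T₁ z hz.2⟩
      · intro c hc
        obtain ⟨w, hwW, hwc⟩ := hc.1
        have hrrB : rr TB w ∈ KB ⊔ QQ T₂ := h2s ▸ rr_mem_QQ TB w
        obtain ⟨u, hu, e, he, heq⟩ := exists_mul_of_mem_sup hQQT₂n hrrB
        have hw'W : w * u⁻¹ ∈ W := mul_mem hwW (inv_mem hu.1)
        have hrrA : rr TA (w * u⁻¹) = c := by
          rw [map_mul, map_inv, hwc, rr_eq_one hu.2 hdisj, inv_one, mul_one]
        have hrrB' : rr TB (w * u⁻¹) = e := by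
          rw [map_mul, map_inv, heq, rr_eq_self hu.2]
          have hcent : u * e = e * u :=
            central_of_mem_QQ_abS hTB_ab hu.2 e
          rw [hcent, mul_assoc, mul_inv_cancel, mul_one]
        have hw'Γ : w * u⁻¹ ∈ Γ := by
          refine ⟨hw'W, ?_⟩
          have hsplit := splitAB _ (hWab hw'W)
          rw [hrrA, hrrB'] at hsplit
          rw [hsplit]
          exact mul_mem (QQ_mono Finset.subset_union_left hc.2)
            (QQ_mono Finset.subset_union_right he)
        exact ⟨w * u⁻¹, hw'Γ, hrrA⟩
    have hCst : FSt (F := F) C := FSt_inf hPAst (FSt_QQ _)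
    obtain ⟨p, hpT₁, S, hSC, hSst, hSne, hSinj⟩ :=
      exists_simple T₁ C hCst inf_le_right hCbot
    obtain ⟨p1, p2⟩ := p
    have hpTA : (⟨p1, p2⟩ : Σ j, Fin (m j)) ∈ TA := hT₁sub hpT₁
    have hp1 : p1 = i := hTAi _ hpTA
    have hp1ab : AbBlock G p1 := by rw [hp1]; exact hab
    set SΓ : Subgroup (∀ j, Fin (m j) → G j) := Γ ⊓ Subgroup.comap (rr TA) S with hSΓ
    have hSΓst : FSt (F := F) SΓ := FSt_inf hΓst (FSt_comap_rr hSst TA)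
    have hSΓ_map : Subgroup.map (rr TA) SΓ = S := by
      apply le_antisymm
      · rintro _ ⟨z, hz, rfl⟩
        exact hz.2
      · intro s hs
        have : s ∈ C := hSC hs
        rw [← hmapΓ] at this
        obtain ⟨z, hzΓ, rfl⟩ := this
        exact ⟨z, ⟨hzΓ, hs⟩, rfl⟩
    have hSΓ_ne : SΓ ≠ ⊥ := fun h => hSne (by rw [← hSΓ_map, h, Subgroup.map_bot])
    have hSΓ_inj : ∀ z ∈ SΓ, z p1 p2 = 1 → z = 1 := by
      intro z hz h1
      have h2 : rr TA z p1 p2 = z p1 p2 := by rw [rr_apply, if_pos hpTA]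
      have h4 : rr TA z = 1 := hSinj _ hz.2 (h2.trans h1)
      exact injA z hz.1 h4
    set S' : Subgroup (∀ j, Fin (m j) → G j) := SΓ.map (rr TB) with hS'
    have hS'st : FSt (F := F) S' := FSt_map_rr hSΓst TB
    have hS'T₂ : S' ≤ QQ T₂ := by
      rintro _ ⟨z, hz, rfl⟩
      exact hrrTB_T₂ z hz.1.2
    have hS'ne : S' ≠ ⊥ := by
      intro h
      apply hSΓ_ne
      rw [Subgroup.eq_bot_iff_forall]
      intro z hz
      have hmem : rr TB z ∈ S' := ⟨z, hz, rfl⟩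
      rw [h, Subgroup.mem_bot] at hmem
      exact injB z hz.1 hmem
    obtain ⟨q, hqT₂, S'', hS''le, hS''st, hS''ne, hS''inj⟩ :=
      exists_simple T₂ S' hS'st hS'T₂ hS'ne
    obtain ⟨q1, q2⟩ := q
    have hqTB : (⟨q1, q2⟩ : Σ j, Fin (m j)) ∈ TB := hT₂sub hqT₂
    have hq1 : q1 ≠ i := hTBi _ hqTB
    have hq1ab : AbBlock G q1 := hTB_ab _ hqTB
    set Λ : Subgroup (∀ j, Fin (m j) → G j) := SΓ ⊓ Subgroup.comap (rr TB) S'' with hΛ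
    have hΛst : FSt (F := F) Λ := FSt_inf hSΓst (FSt_comap_rr hS''st TB)
    have hΛ_map : Subgroup.map (rr TB) Λ = S'' := by
      apply le_antisymm
      · rintro _ ⟨z, hz, rfl⟩
        exact hz.2
      · intro s hs
        have : s ∈ S' := hS''le hs
        obtain ⟨z, hzSΓ, rfl⟩ := this
        exact ⟨z, ⟨hzSΓ, hs⟩, rfl⟩
    have hΛne : Λ ≠ ⊥ := fun h => hS''ne (by rw [← hΛ_map, h, Subgroup.map_bot])
    have hinjp : ∀ z ∈ Λ, z p1 p2 = 1 → z = 1 := fun z hz => hSΓ_inj z hz.1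
    have hinjq : ∀ z ∈ Λ, z q1 q2 = 1 → z = 1 := by
      intro z hz h1
      have h2 : rr TB z q1 q2 = z q1 q2 := by rw [rr_apply, if_pos hqTB]
      have h4 : rr TB z = 1 := hS''inj _ hz.2 (h2.trans h1)
      exact injB z hz.1.1 h4
    -- build the F-isomorphism G p1 ≃* G q1
    set evp : (∀ j, Fin (m j) → G j) →* G p1 :=
      (Pi.evalMonoidHom (fun _ : Fin (m p1) => G p1) p2).comp
        (Pi.evalMonoidHom (fun j => Fin (m j) → G j) p1) with hevp
    set evq : (∀ j, Fin (m j) → G j) →* G q1 :=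
      (Pi.evalMonoidHom (fun _ : Fin (m q1) => G q1) q2).comp
        (Pi.evalMonoidHom (fun j => Fin (m j) → G j) q1) with hevq
    have hevp_apply : ∀ z, evp z = z p1 p2 := fun z => rfl
    have hevq_apply : ∀ z, evq z = z q1 q2 := fun z => rfl
    set φ₁ : ↥Λ →* G p1 := evp.comp Λ.subtype with hφ₁
    set φ₂ : ↥Λ →* G q1 := evq.comp Λ.subtype with hφ₂
    have hφ₁inj : Function.Injective φ₁ :=
      (injective_iff_map_eq_one φ₁).mpr (fun a ha => Subtype.ext (hinjp a.1 a.2 ha))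
    have hφ₂inj : Function.Injective φ₂ :=
      (injective_iff_map_eq_one φ₂).mpr (fun a ha => Subtype.ext (hinjq a.1 a.2 ha))
    have hzex : ∃ z ∈ Λ, z ≠ 1 := by
      by_contra h
      push_neg at h
      exact hΛne ((Subgroup.eq_bot_iff_forall Λ).mpr h)
    obtain ⟨z₀, hz₀Λ, hz₀⟩ := hzex
    have hmapp : Subgroup.map evp Λ = ⊤ := by
      refine ((hirr p1).2 _ ?_).resolve_left ?_
      · refine isNormalF_of_subgroup_ab hp1ab _ (fun f g hg => ?_)
        obtain ⟨z, hz, rfl⟩ := hg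
        exact ⟨f • z, hΛst f z hz, rfl⟩
      · intro h
        apply hz₀
        apply hinjp z₀ hz₀Λ
        have : evp z₀ ∈ Subgroup.map evp Λ := ⟨z₀, hz₀Λ, rfl⟩
        rw [h, Subgroup.mem_bot] at this
        exact this
    have hmapq : Subgroup.map evq Λ = ⊤ := by
      refine ((hirr q1).2 _ ?_).resolve_left ?_
      · refine isNormalF_of_subgroup_ab hq1ab _ (fun f g hg => ?_)
        obtain ⟨z, hz, rfl⟩ := hg
        exact ⟨f • z, hΛst f z hz, rfl⟩
      · intro h
        apply hz₀
        apply hinjq z₀ hz₀Λ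
        have : evq z₀ ∈ Subgroup.map evq Λ := ⟨z₀, hz₀Λ, rfl⟩
        rw [h, Subgroup.mem_bot] at this
        exact this
    have hφ₁surj : Function.Surjective φ₁ := by
      intro g
      have : g ∈ Subgroup.map evp Λ := hmapp ▸ Subgroup.mem_top g
      obtain ⟨z, hz, hze⟩ := this
      exact ⟨⟨z, hz⟩, hze⟩
    have hφ₂surj : Function.Surjective φ₂ := by
      intro g
      have : g ∈ Subgroup.map evq Λ := hmapq ▸ Subgroup.mem_top g
      obtain ⟨z, hz, hze⟩ := this
      exact ⟨⟨z, hz⟩, hze⟩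
    set e₁ := MulEquiv.ofBijective φ₁ ⟨hφ₁inj, hφ₁surj⟩ with he₁
    set e₂ := MulEquiv.ofBijective φ₂ ⟨hφ₂inj, hφ₂surj⟩ with he₂
    set e := e₁.symm.trans e₂ with he
    have hekey : ∀ w : ↥Λ, e (φ₁ w) = φ₂ w := by
      intro w
      have h1 : e₁.symm (φ₁ w) = w := by
        apply e₁.injective
        rw [MulEquiv.apply_symm_apply]
        rfl
      show e₂ (e₁.symm (φ₁ w)) = φ₂ w
      rw [h1]
      rfl
    have hequiv : ∀ (f : F) (g : G p1), e (f • g) = f • e g := by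
      intro f g
      obtain ⟨w, hw⟩ := hφ₁surj g
      have hfw : f • w.1 ∈ Λ := hΛst f w.1 w.2
      have h1 : φ₁ ⟨f • w.1, hfw⟩ = f • g := by
        show evp (f • w.1) = f • g
        rw [← hw]
        rfl
      calc e (f • g) = e (φ₁ ⟨f • w.1, hfw⟩) := by rw [h1]
      _ = φ₂ ⟨f • w.1, hfw⟩ := hekey _
      _ = f • φ₂ w := rfl
      _ = f • e g := by rw [← hw, hekey w]
    exact hnoniso p1 q1 (by rw [hp1]; exact fun h => hq1 h.symm) ⟨e, hequiv⟩

variable (F) in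
lemma key_lemma (hirr : ∀ i, IsIrreducibleFGroup F (G i))
    (hnoniso : ∀ i j, i ≠ j → ¬ IsFIso F (G i) (G j))
    (N : Subgroup (∀ j, Fin (m j) → G j)) (hN : IsNormalFSubgroup F N)
    {x : ∀ j, Fin (m j) → G j} (hx : x ∈ N) (i : Fin k) :
    Pi.mulSingle i (x i) ∈ N := by
  by_cases hab : AbBlock G i
  · obtain ⟨y, hyN, hyV, hyi⟩ := exists_ab_part F hirr N hN hx
    have := abelian_case F hirr hnoniso N hN hab hyN hyV
    rwa [hyi i hab] at this
  · exact mulSingle_block_mem N x i (fun c => single_mem_of_nonab F hirr N hN hab hx c)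

end S4Aux

/-- normal `F`-subgroups of products split as products of their
block projections. -/
theorem normalFSubgroup_eq_prod_of_proj
    {F : Type*} [Group F] {k : ℕ} (G : Fin k → Type*)
    [∀ i, Group (G i)] [∀ i, MulDistribMulAction F (G i)]
    (hirr : ∀ i, IsIrreducibleFGroup F (G i))
    (hnoniso : ∀ i j, i ≠ j → ¬ IsFIso F (G i) (G j))
    (m : Fin k → ℕ)
    (N : Subgroup (∀ i, Fin (m i) → G i))
    (hN : IsNormalFSubgroup F N) :
    (∀ i, IsNormalFSubgroup F
        (Subgroup.map (Pi.evalMonoidHom (fun i => Fin (m i) → G i) i) N)) ∧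
    ∀ x : ∀ i, Fin (m i) → G i,
      x ∈ N ↔ ∀ i, x i ∈
        Subgroup.map (Pi.evalMonoidHom (fun i => Fin (m i) → G i) i) N := by

  constructor
  · intro i
    constructor
    · constructor
      rintro _ ⟨w, hwN, rfl⟩ g
      refine ⟨Pi.mulSingle i g * w * (Pi.mulSingle i g)⁻¹,
        hN.1.conj_mem w hwN (Pi.mulSingle i g), ?_⟩
      simp only [Pi.evalMonoidHom_apply, Pi.mul_apply, Pi.inv_apply, Pi.mulSingle_eq_same]
    · rintro f _ ⟨w, hwN, rfl⟩
      exact ⟨f • w, hN.2 f w hwN, rfl⟩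
  · intro x
    constructor
    · intro hx i
      exact ⟨x, hx, rfl⟩
    · intro h
      apply S4Aux.mem_of_blocks N x
      intro j
      obtain ⟨w, hwN, hwj⟩ := h j
      have := S4Aux.key_lemma F hirr hnoniso N hN hwN j
      have hwj' : w j = x j := hwj
      rwa [hwj'] at this
end

section
/- Let F be a group, let G₁,…,G_k be irreducible F-groups such that G_i and G_j are not isomorphic as F-groups for i ≠ j, let m₁,…,m_k be non-negative integers, and let N be a normal F-subgroup of ∏_{i=1}^k G_i^{m_i}. Then N = ∏_{i=1}^k G_i^{m_i} if and only if for every i the image of N under the projection onto the block G_i^{m_i} is all of G_i^{m_i}. -/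
/-!  Auxiliary machinery -/

section PiAux

variable {ι : Type} (H : ι → Type*) [∀ t, Group (H t)] (s : ι)

/-- Restriction hom to coordinates different from `s`. -/
def piRestrict : (∀ t, H t) →* (∀ t : {t : ι // t ≠ s}, H t.1) :=
  Pi.monoidHom fun t' => Pi.evalMonoidHom H t'.1

variable [DecidableEq ι]

/-- Extension-by-one hom from coordinates different from `s`. -/
def piExtend : (∀ t : {t : ι // t ≠ s}, H t.1) →* (∀ t, H t) where
  toFun x t := if h : t = s then 1 else x ⟨t, h⟩
  map_one' := by funext t; by_cases h : t = s <;> simp [h]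
  map_mul' x y := by funext t; by_cases h : t = s <;> simp [h]

lemma piRestrict_piExtend (x : ∀ t : {t : ι // t ≠ s}, H t.1) :
    piRestrict H s (piExtend H s x) = x := by
  funext t'
  show (if h : (t' : ι) = s then 1 else x ⟨t', h⟩) = x t'
  rw [dif_neg t'.2]

lemma piExtend_apply_self (x : ∀ t : {t : ι // t ≠ s}, H t.1) :
    piExtend H s x s = 1 := dif_pos rfl

lemma piExtend_piRestrict (p : ∀ t, H t) (hp : p s = 1) :
    piExtend H s (piRestrict H s p) = p := by
  funext t
  show (if h : t = s then 1 else p t) = p t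
  by_cases h : t = s
  · rw [dif_pos h, h, hp]
  · rw [dif_neg h]

variable {F : Type*} [Group F] [∀ t, MulDistribMulAction F (H t)]

lemma piRestrict_smul (f : F) (p : ∀ t, H t) :
    piRestrict H s (f • p) = f • piRestrict H s p := rfl

lemma piExtend_smul (f : F) (x : ∀ t : {t : ι // t ≠ s}, H t.1) :
    piExtend H s (f • x) = f • piExtend H s x := by
  funext t
  have h1 : (f • piExtend H s x) t = f • (piExtend H s x t) := rfl
  rw [h1]
  show (if h : t = s then (1 : H t) else (f • x) ⟨t, h⟩)
      = f • (if h : t = s then (1 : H t) else x ⟨t, h⟩)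
  by_cases h : t = s
  · rw [dif_pos h, dif_pos h, smul_one]
  · rw [dif_neg h, dif_neg h]; rfl

end PiAux

section Key

universe u

variable {F : Type*} [Group F]

/-- Key structure lemma: a proper normal `F`-subgroup of a finite product of irreducible
`F`-groups is killed by some `F`-epimorphism onto one of the factors. -/
theorem key_aux :
    ∀ (n : ℕ) (ι : Type) [Fintype ι] (H : ι → Type u) [∀ t, Group (H t)]
      [∀ t, MulDistribMulAction F (H t)],
      Fintype.card ι = n →
      (∀ t, IsIrreducibleFGroup F (H t)) →
      ∀ N : Subgroup (∀ t, H t), IsNormalFSubgroup F N → N ≠ ⊤ →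
      ∃ (t : ι) (φ : (∀ t, H t) →* H t),
        IsFHom F φ ∧ Function.Surjective φ ∧ N ≤ φ.ker := by
  intro n
  induction n with
  | zero =>
    intro ι _ H _ _ hcard _ N hN hNne
    have hempty : IsEmpty ι := Fintype.card_eq_zero_iff.mp hcard
    exact absurd (by
      rw [eq_top_iff]
      intro p _
      have : p = 1 := funext fun t => (hempty.false t).elim
      rw [this]; exact N.one_mem) hNne
  | succ n ih =>
    intro ι _ H _ _ hcard hirr N hN hNne
    classical
    obtain ⟨s⟩ : Nonempty ι := Fintype.card_pos_iff.mp (hcard ▸ n.succ_pos)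
    set πs : (∀ t, H t) →* H s := Pi.evalMonoidHom H s with hπs
    have hπssurj : Function.Surjective πs := Function.surjective_eval s
    by_cases htop : Subgroup.map πs N = ⊤
    · -- Case 2: the projection of `N` to coordinate `s` is everything.
      set e := piExtend H s with he
      set ρ := piRestrict H s with hρ
      have hdecomp : ∀ p : ∀ t, H t, ∃ nn ∈ N, πs nn = πs p := by
        intro p
        have : πs p ∈ Subgroup.map πs N := by rw [htop]; trivial
        obtain ⟨nn, hn, h⟩ := this
        exact ⟨nn, hn, h⟩
      have hbmem : ∀ (nn p : ∀ t, H t), πs nn = πs p → e (ρ (nn⁻¹ * p)) = nn⁻¹ * p := by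
        intro nn p h
        refine piExtend_piRestrict H s _ ?_
        show (nn⁻¹ * p) s = 1
        have h1 : (nn⁻¹ * p) s = (nn s)⁻¹ * p s := rfl
        have h2 : nn s = p s := h
        rw [h1, h2, inv_mul_cancel]
      -- the comap of `N` under the extension map
      set K : Subgroup (∀ t : {t : ι // t ≠ s}, H t.1) := Subgroup.comap e N with hK
      have hKnormal : K.Normal := by
        constructor
        intro x hx y
        show e (y * x * y⁻¹) ∈ N
        rw [map_mul, map_mul, map_inv]
        exact hN.1.conj_mem (e x) hx (e y)
      have hKF : ∀ (f : F) x, x ∈ K → f • x ∈ K := by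
        intro f x hx
        show e (f • x) ∈ N
        rw [piExtend_smul]
        exact hN.2 f _ hx
      have hKne : K ≠ ⊤ := by
        intro h
        apply hNne
        rw [eq_top_iff]
        intro p _
        obtain ⟨nn, hnn, hpn⟩ := hdecomp p
        have hb : e (ρ (nn⁻¹ * p)) = nn⁻¹ * p := hbmem nn p hpn
        have hmem : ρ (nn⁻¹ * p) ∈ K := h ▸ Subgroup.mem_top _
        have h2 : nn⁻¹ * p ∈ N := by rw [← hb]; exact hmem
        have := N.mul_mem hnn h2
        simpa using this
      have hcard' : Fintype.card {t : ι // t ≠ s} = n := by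
        have h1 : Fintype.card {t : ι // ¬ t = s} =
            Fintype.card ι - Fintype.card {t : ι // t = s} :=
          Fintype.card_subtype_compl _
        have h2 : Fintype.card {t : ι // t = s} = 1 := Fintype.card_subtype_eq s
        have : Fintype.card {t : ι // t ≠ s} =
            Fintype.card ι - Fintype.card {t : ι // t = s} := h1
        rw [this, h2, hcard]
        omega
      obtain ⟨t', φ', hφ'F, hφ'surj, hφ'ker⟩ :=
        ih {t : ι // t ≠ s} (fun t' => H t'.1) hcard' (fun t' => hirr t'.1)
          K ⟨hKnormal, hKF⟩ hKne
      -- build the quotient map machinery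
      haveI : N.Normal := hN.1
      set mkN := QuotientGroup.mk' N with hmkN
      set η : (∀ t' : {t : ι // t ≠ s}, H t'.1) →* (∀ t, H t) ⧸ N := mkN.comp e with hη
      have hηsurj : Function.Surjective η := by
        intro q
        obtain ⟨p, rfl⟩ := QuotientGroup.mk'_surjective N q
        obtain ⟨nn, hnn, hpn⟩ := hdecomp p
        refine ⟨ρ (nn⁻¹ * p), ?_⟩
        show mkN (e (ρ (nn⁻¹ * p))) = mkN p
        rw [hbmem nn p hpn]
        rw [map_mul, map_inv]
        have h1 : mkN nn = 1 := (QuotientGroup.eq_one_iff nn).mpr hnn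
        rw [h1, inv_one, one_mul]
      have hηker : η.ker = K := by
        ext x
        change (QuotientGroup.mk (e x) : _ ⧸ N) = 1 ↔ e x ∈ N
        exact QuotientGroup.eq_one_iff _
      have hvanish : ∀ x ∈ η.ker, φ' x = 1 := by
        intro x hx
        rw [hηker] at hx
        exact hφ'ker hx
      set χ₀ : ((∀ t' : {t : ι // t ≠ s}, H t'.1) ⧸ η.ker) →* H t'.1 :=
        QuotientGroup.lift η.ker φ' hvanish with hχ₀
      set eiso := QuotientGroup.quotientKerEquivOfSurjective η hηsurj with heiso
      set ψ : (∀ t, H t) →* H t'.1 :=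
        χ₀.comp (eiso.symm.toMonoidHom.comp mkN) with hψ
      have hψe : ∀ x, ψ (e x) = φ' x := by
        intro x
        show χ₀ (eiso.symm (mkN (e x))) = φ' x
        have h1 : eiso (QuotientGroup.mk x) = mkN (e x) :=
          QuotientGroup.kerLift_mk η x
        rw [← h1, MulEquiv.symm_apply_apply]
        exact QuotientGroup.lift_mk' η.ker hvanish x
      have hψN : ∀ nn ∈ N, ψ nn = 1 := by
        intro nn hnn
        show χ₀ (eiso.symm (mkN nn)) = 1
        have h1 : mkN nn = 1 := (QuotientGroup.eq_one_iff nn).mpr hnn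
        rw [h1, map_one, map_one]
      refine ⟨t'.1, ψ, ?_, ?_, ?_⟩
      · -- F-equivariance
        intro f p
        obtain ⟨nn, hnn, hpn⟩ := hdecomp p
        have hb : e (ρ (nn⁻¹ * p)) = nn⁻¹ * p := hbmem nn p hpn
        have hsplit : p = nn * e (ρ (nn⁻¹ * p)) := by rw [hb]; group
        have hval : ψ p = φ' (ρ (nn⁻¹ * p)) := by
          conv_lhs => rw [hsplit]
          rw [map_mul, hψN nn hnn, one_mul, hψe]
        have hsmulsplit : f • p = (f • nn) * e (f • ρ (nn⁻¹ * p)) := by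
          rw [piExtend_smul, hb, ← smul_mul', mul_inv_cancel_left]
        rw [hsmulsplit, map_mul, hψN _ (hN.2 f nn hnn), one_mul, hψe,
          hφ'F, hval]
      · -- surjectivity
        intro a
        obtain ⟨x, hx⟩ := hφ'surj a
        exact ⟨e x, (hψe x).trans hx⟩
      · -- N in kernel
        intro nn hnn
        exact hψN nn hnn
    · -- Case 1: the projection of `N` to coordinate `s` is proper, hence trivial.
      have hmapN : IsNormalFSubgroup F (Subgroup.map πs N) := by
        constructor
        · exact Subgroup.Normal.map hN.1 πs hπssurj
        · rintro f x ⟨nn, hnn, rfl⟩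
          exact ⟨f • nn, hN.2 f nn hnn, rfl⟩
      rcases (hirr s).2 _ hmapN with hbot | htop'
      · refine ⟨s, πs, fun f x => rfl, hπssurj, ?_⟩
        intro x hx
        have : πs x ∈ Subgroup.map πs N := ⟨x, hx, rfl⟩
        rw [hbot] at this
        exact this
      · exact absurd htop' htop

end Key

section Epi

universe u

variable {F : Type*} [Group F]

/-- If a finite product of irreducible `F`-groups surjects `F`-equivariantly onto an
irreducible `F`-group `Q`, then some factor is `F`-isomorphic to `Q`. -/
theorem epi_aux :
    ∀ (n : ℕ) (ι : Type) [Fintype ι] (H : ι → Type u) [∀ t, Group (H t)]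
      [∀ t, MulDistribMulAction F (H t)],
      Fintype.card ι = n →
      (∀ t, IsIrreducibleFGroup F (H t)) →
      ∀ (Q : Type u) [Group Q] [MulDistribMulAction F Q] (ψ : (∀ t, H t) →* Q),
        IsFHom F ψ → Function.Surjective ψ → IsIrreducibleFGroup F Q →
        ∃ t, IsFIso F (H t) Q := by
  intro n
  induction n with
  | zero =>
    intro ι _ H _ _ hcard _ Q _ _ ψ _ hsurj hQ
    have hempty : IsEmpty ι := Fintype.card_eq_zero_iff.mp hcard
    obtain ⟨a, b, hab⟩ := hQ.1
    obtain ⟨x, rfl⟩ := hsurj a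
    obtain ⟨y, rfl⟩ := hsurj b
    exact absurd (congrArg ψ (funext fun t => (hempty.false t).elim)) hab
  | succ n ih =>
    intro ι _ H _ _ hcard hirr Q _ _ ψ hψF hψsurj hQ
    classical
    obtain ⟨s⟩ : Nonempty ι := Fintype.card_pos_iff.mp (hcard ▸ n.succ_pos)
    set ρ := piRestrict H s with hρ
    set e := piExtend H s with he
    have hcard' : Fintype.card {t : ι // t ≠ s} = n := by
      have h1 : Fintype.card {t : ι // ¬ t = s} =
          Fintype.card ι - Fintype.card {t : ι // t = s} :=
        Fintype.card_subtype_compl _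
      have h2 : Fintype.card {t : ι // t = s} = 1 := Fintype.card_subtype_eq s
      have h3 : Fintype.card {t : ι // t ≠ s} =
          Fintype.card ι - Fintype.card {t : ι // t = s} := h1
      rw [h3, h2, hcard]
      omega
    set J : Subgroup Q := Subgroup.map ψ ρ.ker with hJ
    have hJnf : IsNormalFSubgroup F J := by
      constructor
      · exact Subgroup.Normal.map (MonoidHom.normal_ker ρ) ψ hψsurj
      · rintro f x ⟨p, hp, rfl⟩
        refine ⟨f • p, ?_, hψF f p⟩
        have hp1 : ρ p = 1 := hp
        show ρ (f • p) = 1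
        rw [piRestrict_smul, hp1, smul_one]
    rcases hQ.2 J hJnf with hbot | htop
    · -- ψ kills the s-th coordinate subgroup: factor through the rest.
      set ψ₁ : (∀ t : {t : ι // t ≠ s}, H t.1) →* Q := ψ.comp e with hψ₁
      have hψ₁F : IsFHom F ψ₁ := by
        intro f x
        show ψ (e (f • x)) = f • ψ (e x)
        rw [piExtend_smul]
        exact hψF f (e x)
      have hψ₁surj : Function.Surjective ψ₁ := by
        intro q
        obtain ⟨p, rfl⟩ := hψsurj q
        refine ⟨ρ p, ?_⟩
        have hc : ρ ((e (ρ p))⁻¹ * p) = 1 := by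
          rw [map_mul, map_inv, piRestrict_piExtend, inv_mul_cancel]
        have hcJ : ψ ((e (ρ p))⁻¹ * p) ∈ J := ⟨_, hc, rfl⟩
        rw [hbot, Subgroup.mem_bot] at hcJ
        have : ψ p = ψ (e (ρ p)) * ψ ((e (ρ p))⁻¹ * p) := by
          rw [← map_mul, mul_inv_cancel_left]
        rw [this, hcJ, mul_one]
        rfl
      obtain ⟨t', hiso⟩ := ih {t : ι // t ≠ s} (fun t' => H t'.1) hcard'
        (fun t' => hirr t'.1) Q ψ₁ hψ₁F hψ₁surj hQ
      exact ⟨t'.1, hiso⟩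
    · -- ψ restricted to the s-th coordinate subgroup is onto: H s ≅ Q.
      set θ : H s →* Q := ψ.comp (MonoidHom.mulSingle H s) with hθ
      have hsingle_smul : ∀ (f : F) (a : H s),
          MonoidHom.mulSingle H s (f • a) = f • MonoidHom.mulSingle H s a := by
        intro f a
        have hc : ∀ b : H s, ⇑(MonoidHom.mulSingle H s) b = Pi.mulSingle s b :=
          fun _ => rfl
        funext t
        have h1 : (f • (MonoidHom.mulSingle H s a)) t
            = f • ((MonoidHom.mulSingle H s a) t) := rfl
        rw [h1, hc (f • a), hc a]
        by_cases h : t = s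
        · subst h
          rw [Pi.mulSingle_eq_same, Pi.mulSingle_eq_same]
        · rw [Pi.mulSingle_eq_of_ne h, Pi.mulSingle_eq_of_ne h, smul_one]
      have hθF : IsFHom F θ := by
        intro f a
        show ψ (MonoidHom.mulSingle H s (f • a)) = f • ψ (MonoidHom.mulSingle H s a)
        rw [hsingle_smul]
        exact hψF f _
      have hθsurj : Function.Surjective θ := by
        intro q
        have : q ∈ J := htop ▸ Subgroup.mem_top q
        obtain ⟨p, hp, rfl⟩ := this
        refine ⟨p s, ?_⟩
        have hps : MonoidHom.mulSingle H s (p s) = p := by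
          funext t
          show Pi.mulSingle s (p s) t = p t
          by_cases h : t = s
          · subst h; exact Pi.mulSingle_eq_same t (p t)
          · have h1 : ρ p ⟨t, h⟩ = p t := rfl
            have h2 : ρ p = 1 := hp
            rw [Pi.mulSingle_eq_of_ne h, ← h1, h2]
            rfl
        show ψ (MonoidHom.mulSingle H s (p s)) = ψ p
        rw [hps]
      have hθkernf : IsNormalFSubgroup F θ.ker := by
        refine ⟨MonoidHom.normal_ker θ, ?_⟩
        intro f a ha
        have h1 : θ a = 1 := ha
        show θ (f • a) = 1
        rw [hθF, h1, smul_one]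
      rcases (hirr s).2 θ.ker hθkernf with hker | hker
      · have hinj : Function.Injective θ := (MonoidHom.ker_eq_bot_iff θ).mp hker
        refine ⟨s, MulEquiv.ofBijective θ ⟨hinj, hθsurj⟩, ?_⟩
        intro f a
        exact hθF f a
      · haveI := hQ.1
        obtain ⟨q, hq⟩ := exists_ne (1 : Q)
        obtain ⟨a, ha⟩ := hθsurj q
        have hmem : a ∈ θ.ker := hker ▸ Subgroup.mem_top a
        have : θ a = 1 := hmem
        exact absurd (ha ▸ this) hq

end Epi


/-- a normal `F`-subgroup of `∏ᵢ Gᵢ^{mᵢ}` is everything iff each of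
its block projections is everything. -/
theorem normalFSubgroup_eq_top_iff_proj_top
    {F : Type*} [Group F] {k : ℕ} (G : Fin k → Type*)
    [∀ i, Group (G i)] [∀ i, MulDistribMulAction F (G i)]
    (hirr : ∀ i, IsIrreducibleFGroup F (G i))
    (hnoniso : ∀ i j, i ≠ j → ¬ IsFIso F (G i) (G j))
    (m : Fin k → ℕ)
    (N : Subgroup (∀ i, Fin (m i) → G i))
    (hN : IsNormalFSubgroup F N) :
    N = ⊤ ↔ ∀ i,
      Subgroup.map (Pi.evalMonoidHom (fun i => Fin (m i) → G i) i) N = ⊤ := by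
  classical
  constructor
  · intro h i
    rw [h]
    exact Subgroup.map_top_of_surjective _
      (fun a => ⟨Pi.mulSingle (M := fun i => Fin (m i) → G i) i a,
        Pi.mulSingle_eq_same (M := fun i => Fin (m i) → G i) i a⟩)
  · intro hproj
    by_contra hne
    -- reindex the double product as a product over a sigma type
    set σ : (∀ t : Σ i : Fin k, Fin (m i), G t.1) ≃* (∀ i, Fin (m i) → G i) :=
      { toFun := fun q i j => q ⟨i, j⟩
        invFun := fun p t => p t.1 t.2
        left_inv := fun q => rfl
        right_inv := fun p => rfl
        map_mul' := fun q r => rfl } with hσ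
    set N' : Subgroup (∀ t : Σ i : Fin k, Fin (m i), G t.1) := N.comap σ.toMonoidHom
      with hN'def
    have hN' : IsNormalFSubgroup F N' := by
      constructor
      · exact Subgroup.Normal.comap hN.1 _
      · intro f x hx
        show σ (f • x) ∈ N
        have h1 : σ (f • x) = f • σ x := rfl
        rw [h1]
        exact hN.2 f _ hx
    have hN'ne : N' ≠ ⊤ := by
      intro h
      apply hne
      rw [eq_top_iff]
      intro p _
      have h1 : σ.symm p ∈ N' := h ▸ Subgroup.mem_top _
      have h2 : σ (σ.symm p) ∈ N := h1
      rwa [MulEquiv.apply_symm_apply] at h2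
    obtain ⟨⟨i, j₀⟩, φ, hφF, hφsurj, hφker⟩ :=
      key_aux (Fintype.card (Σ i : Fin k, Fin (m i))) _ (fun t => G t.1) rfl
        (fun t => hirr t.1) N' hN' hN'ne
    set φh : (∀ i, Fin (m i) → G i) →* G i := φ.comp σ.symm.toMonoidHom with hφh
    have hφhF : IsFHom F φh := by
      intro f p
      show φ (σ.symm (f • p)) = f • φ (σ.symm p)
      have h1 : σ.symm (f • p) = f • σ.symm p := rfl
      rw [h1]
      exact hφF f _
    have hφhsurj : Function.Surjective φh := by
      intro a
      obtain ⟨x, hx⟩ := hφsurj a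
      refine ⟨σ x, ?_⟩
      show φ (σ.symm (σ x)) = a
      rwa [MulEquiv.symm_apply_apply]
    have hφhker : ∀ p ∈ N, φh p = 1 := by
      intro p hp
      have h1 : σ.symm p ∈ N' := by
        show σ (σ.symm p) ∈ N
        rw [MulEquiv.apply_symm_apply]
        exact hp
      exact hφker h1
    -- now build a surjection onto `G i` from the product of the other blocks
    set σ₁ : (∀ t : Σ j : {j : Fin k // j ≠ i}, Fin (m j.1), G t.1.1) ≃*
        (∀ j : {j : Fin k // j ≠ i}, Fin (m j.1) → G j.1) :=
      { toFun := fun q j l => q ⟨j, l⟩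
        invFun := fun d t => d t.1 t.2
        left_inv := fun q => rfl
        right_inv := fun d => rfl
        map_mul' := fun q r => rfl } with hσ₁
    set ε : (∀ j : {j : Fin k // j ≠ i}, Fin (m j.1) → G j.1) →*
        (∀ i, Fin (m i) → G i) := piExtend (fun i => Fin (m i) → G i) i with hε
    set ψ : (∀ t : Σ j : {j : Fin k // j ≠ i}, Fin (m j.1), G t.1.1) →* G i :=
      φh.comp (ε.comp σ₁.toMonoidHom) with hψ
    have hψF : IsFHom F ψ := by
      intro f x
      show φh (ε (σ₁ (f • x))) = f • φh (ε (σ₁ x))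
      have h1 : σ₁ (f • x) = f • σ₁ x := rfl
      rw [h1, piExtend_smul]
      exact hφhF f _
    have hψsurj : Function.Surjective ψ := by
      intro a
      obtain ⟨p, hp⟩ := hφhsurj a
      have hmem : p i ∈ Subgroup.map (Pi.evalMonoidHom (fun i => Fin (m i) → G i) i) N := by
        rw [hproj i]
        trivial
      obtain ⟨nn, hnn, hnni⟩ := hmem
      have hbi : (nn⁻¹ * p) i = 1 := by
        have h1 : (nn⁻¹ * p) i = (nn i)⁻¹ * p i := rfl
        rw [h1, show nn i = p i from hnni, inv_mul_cancel]
      set d : ∀ j : {j : Fin k // j ≠ i}, Fin (m j.1) → G j.1 :=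
        fun j => (nn⁻¹ * p) j.1 with hd
      have hεd : ε d = nn⁻¹ * p := by
        funext j
        show (if h : j = i then 1 else (nn⁻¹ * p) j) = (nn⁻¹ * p) j
        by_cases h : j = i
        · rw [dif_pos h, h, hbi]
        · rw [dif_neg h]
      refine ⟨σ₁.symm d, ?_⟩
      show φh (ε (σ₁ (σ₁.symm d))) = a
      rw [MulEquiv.apply_symm_apply, hεd, map_mul, map_inv, hφhker nn hnn,
        inv_one, one_mul, hp]
    obtain ⟨t₁, hiso⟩ :=
      epi_aux (Fintype.card (Σ j : {j : Fin k // j ≠ i}, Fin (m j.1))) _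
        (fun t => G t.1.1) rfl (fun t => hirr t.1.1) (G i) ψ hψF hψsurj (hirr i)
    exact hnoniso t₁.1.1 i t₁.1.2 hiso
end

section
/- Let F be a group, let G₁,…,G_k be finite irreducible F-groups such that G_i and G_j are not isomorphic as F-groups for i ≠ j, let m₁,…,m_k be non-negative integers, let R = ∏_{i=1}^k G_i^{m_i}, and let N be a positive integer. Then the number of N-tuples (x₁,…,x_N) ∈ R^N with [x₁,…,x_N]_F = R equals the product over i = 1,…,k of the number of N-tuples (y₁,…,y_N) ∈ (G_i^{m_i})^N with [y₁,…,y_N]_F = G_i^{m_i}. -/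
section ProofAux

open Subgroup

variable {F : Type*} [Group F]

lemma normalFClosure_eq_top_iff' {G : Type*} [Group G] [MulDistribMulAction F G] (s : Set G) :
    normalFClosure F s = ⊤ ↔ ∀ H : Subgroup G, IsNormalFSubgroup F H → s ⊆ H → H = ⊤ := by
  rw [normalFClosure, sInf_eq_top]
  exact ⟨fun h H h1 h2 => h H ⟨h1, h2⟩, fun h H hH => h H hH.1 hH.2⟩

lemma isNormalF_comap {G G' : Type*} [Group G] [Group G'] [MulDistribMulAction F G]
    [MulDistribMulAction F G'] {φ : G →* G'} (hφ : IsFHom F φ) {H : Subgroup G'}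
    (hH : IsNormalFSubgroup F H) : IsNormalFSubgroup F (H.comap φ) := by
  refine ⟨hH.1.comap φ, fun f x hx => ?_⟩
  simp only [Subgroup.mem_comap] at hx ⊢
  rw [hφ]
  exact hH.2 f _ hx

lemma isNormalF_map {G G' : Type*} [Group G] [Group G'] [MulDistribMulAction F G]
    [MulDistribMulAction F G'] {φ : G →* G'} (hφ : IsFHom F φ) (hs : Function.Surjective φ)
    {H : Subgroup G} (hH : IsNormalFSubgroup F H) : IsNormalFSubgroup F (H.map φ) := by
  refine ⟨hH.1.map φ hs, ?_⟩
  rintro f x ⟨y, hy, rfl⟩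
  exact ⟨f • y, hH.2 f y hy, hφ f y⟩

lemma isNormalF_sup {G : Type*} [Group G] [MulDistribMulAction F G] {H K : Subgroup G}
    (hH : IsNormalFSubgroup F H) (hK : IsNormalFSubgroup F K) :
    IsNormalFSubgroup F (H ⊔ K) := by
  haveI := hH.1; haveI := hK.1
  refine ⟨Subgroup.sup_normal H K, fun f x hx => ?_⟩
  have h1 : H ⊔ K ≤ Subgroup.comap (MulDistribMulAction.toMonoidHom G f) (H ⊔ K) := by
    refine sup_le (fun y hy => ?_) (fun y hy => ?_)
    · exact Subgroup.mem_comap.2 ((le_sup_left : H ≤ H ⊔ K) (hH.2 f y hy))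
    · exact Subgroup.mem_comap.2 ((le_sup_right : K ≤ H ⊔ K) (hK.2 f y hy))
  exact h1 hx

lemma isNormalF_ker {G G' : Type*} [Group G] [Group G'] [MulDistribMulAction F G]
    [MulDistribMulAction F G'] {φ : G →* G'} (hφ : IsFHom F φ) :
    IsNormalFSubgroup F φ.ker := by
  refine ⟨φ.normal_ker, fun f x hx => ?_⟩
  simp only [MonoidHom.mem_ker] at hx ⊢
  rw [hφ, hx, smul_one]

lemma mem_of_mulSingle_mem {ι : Type*} [Fintype ι] [DecidableEq ι] {Z : ι → Type*}
    [∀ i, Group (Z i)] (M : Subgroup (∀ i, Z i)) (x : ∀ i, Z i)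
    (h : ∀ j, Pi.mulSingle j (x j) ∈ M) : x ∈ M := by
  have key : ∀ s : Finset ι, (fun j => if j ∈ s then x j else 1) ∈ M := by
    intro s
    induction s using Finset.induction with
    | empty =>
      rw [show (fun j => if j ∈ (∅ : Finset ι) then x j else 1) = 1 from funext fun j => by simp]
      exact M.one_mem
    | @insert a s ha ih =>
        have hfun : (fun j => if j ∈ insert a s then x j else 1) =
            Pi.mulSingle a (x a) * (fun j => if j ∈ s then x j else 1) := by
          funext l
          by_cases hl : l = a
          · subst hl
            simp [ha]
          · simp [hl, Finset.mem_insert, Pi.mulSingle_eq_of_ne hl]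
        rw [hfun]
        exact M.mul_mem (h a) ih
  simpa using key Finset.univ

lemma smul_mulSingle' {ι : Type*} [DecidableEq ι] {Z : ι → Type*} [∀ i, Group (Z i)]
    [∀ i, MulDistribMulAction F (Z i)] (f : F) (j : ι) (a : Z j) :
    f • Pi.mulSingle j a = Pi.mulSingle j (f • a) := by
  funext l
  by_cases hl : l = j
  · subst hl; simp
  · simp [Pi.mulSingle_eq_of_ne hl, smul_one]

lemma mulSingleRange_normalF {ι : Type*} [DecidableEq ι] {Z : ι → Type*} [∀ i, Group (Z i)]
    [∀ i, MulDistribMulAction F (Z i)] (j : ι) :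
    IsNormalFSubgroup F (MonoidHom.mulSingle Z j).range := by
  constructor
  · constructor
    rintro n ⟨a, rfl⟩ g
    refine ⟨g j * a * (g j)⁻¹, ?_⟩
    funext l
    by_cases hl : l = j
    · subst hl
      simp [MonoidHom.mulSingle_apply]
    · simp [MonoidHom.mulSingle_apply, Pi.mulSingle_eq_of_ne hl]
  · rintro f x ⟨a, rfl⟩
    refine ⟨f • a, ?_⟩
    simp only [MonoidHom.mulSingle_apply]
    exact (smul_mulSingle' f j a).symm

/-- Quotient of an `F`-group by a normal `F`-subgroup is an `F`-group. -/
def quotFAction {G : Type*} [Group G] [MulDistribMulAction F G] (M : Subgroup G)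
    [nM : M.Normal] (hM : ∀ (f : F), ∀ x ∈ M, f • x ∈ M) :
    MulDistribMulAction F (G ⧸ M) where
  smul f := QuotientGroup.map M M (MulDistribMulAction.toMonoidHom G f)
    (fun x hx => Subgroup.mem_comap.2 (hM f x hx))
  one_smul q := QuotientGroup.induction_on q fun x => by
    show QuotientGroup.map M M (MulDistribMulAction.toMonoidHom G (1 : F)) _
      (QuotientGroup.mk x) = QuotientGroup.mk x
    rw [QuotientGroup.map_mk]
    simp
  mul_smul f g q := QuotientGroup.induction_on q fun x => by
    show QuotientGroup.map M M (MulDistribMulAction.toMonoidHom G (f * g)) _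
        (QuotientGroup.mk x) =
      QuotientGroup.map M M (MulDistribMulAction.toMonoidHom G f) _
        (QuotientGroup.map M M (MulDistribMulAction.toMonoidHom G g) _ (QuotientGroup.mk x))
    rw [QuotientGroup.map_mk, QuotientGroup.map_mk, QuotientGroup.map_mk]
    simp [mul_smul]
  smul_mul f q r := QuotientGroup.induction_on q fun x => QuotientGroup.induction_on r fun y => by
    show QuotientGroup.map M M (MulDistribMulAction.toMonoidHom G f) _
        (QuotientGroup.mk x * QuotientGroup.mk y) =
      QuotientGroup.map M M (MulDistribMulAction.toMonoidHom G f) _ (QuotientGroup.mk x) *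
      QuotientGroup.map M M (MulDistribMulAction.toMonoidHom G f) _ (QuotientGroup.mk y)
    rw [← QuotientGroup.mk_mul, QuotientGroup.map_mk, QuotientGroup.map_mk, QuotientGroup.map_mk,
      ← QuotientGroup.mk_mul]
    simp [smul_mul']
  smul_one f := by
    show QuotientGroup.map M M (MulDistribMulAction.toMonoidHom G f) _ 1 = 1
    exact map_one _

/-- Key lemma A: a surjective `F`-morphism from a power of an irreducible `F`-group to an
irreducible `F`-group yields an `F`-isomorphism with the base. -/
lemma lemA {ι : Type*} [Fintype ι] [DecidableEq ι] {G B : Type*} [Group G] [Group B]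
    [MulDistribMulAction F G] [MulDistribMulAction F B]
    (hG : IsIrreducibleFGroup F G) (hBnt : Nontrivial B)
    (hBirr : ∀ K : Subgroup B, IsNormalFSubgroup F K → K = ⊥ ∨ K = ⊤)
    (φ : (ι → G) →* B) (hs : Function.Surjective φ) (hφ : IsFHom F φ) :
    IsFIso F G B := by
  obtain ⟨b₁, b₂, hb⟩ := hBnt
  have hnontriv : ¬ (∀ b : B, b = (1 : B)) := fun h => hb ((h b₁).trans (h b₂).symm)
  by_cases hj : ∃ j, Subgroup.map φ (MonoidHom.mulSingle (fun _ : ι => G) j).range = ⊤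
  · obtain ⟨j, hjtop⟩ := hj
    set ψ : G →* B := φ.comp (MonoidHom.mulSingle (fun _ : ι => G) j) with hψ
    have hψs : Function.Surjective ψ := by
      rw [← MonoidHom.range_eq_top, hψ, MonoidHom.range_comp, hjtop]
    have hψF : IsFHom F ψ := by
      intro f a
      show φ (MonoidHom.mulSingle (fun _ : ι => G) j (f • a)) = f • φ _
      rw [MonoidHom.mulSingle_apply, MonoidHom.mulSingle_apply, ← smul_mulSingle', hφ]
    rcases hG.2 ψ.ker (isNormalF_ker hψF) with hker | hker
    · have hinj : Function.Injective ψ := (MonoidHom.ker_eq_bot_iff ψ).1 hker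
      exact ⟨MulEquiv.ofBijective ψ ⟨hinj, hψs⟩, fun f a => hψF f a⟩
    · exfalso
      apply hnontriv
      intro b
      obtain ⟨a, rfl⟩ := hψs b
      have : a ∈ ψ.ker := hker ▸ Subgroup.mem_top a
      exact this
  · exfalso
    push_neg at hj
    have hbot : ∀ j, Subgroup.map φ (MonoidHom.mulSingle (fun _ : ι => G) j).range = ⊥ := by
      intro j
      rcases hBirr _ (isNormalF_map hφ hs (mulSingleRange_normalF j)) with h | h
      · exact h
      · exact absurd h (hj j)
    apply hnontriv
    intro b
    obtain ⟨x, rfl⟩ := hs b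
    have hx : x ∈ φ.ker := by
      apply mem_of_mulSingle_mem
      intro l
      have h1 : φ (Pi.mulSingle l (x l)) ∈
          Subgroup.map φ (MonoidHom.mulSingle (fun _ : ι => G) l).range :=
        ⟨Pi.mulSingle l (x l), ⟨x l, rfl⟩, rfl⟩
      rw [hbot l] at h1
      exact h1
    exact hx

end ProofAux

section ProofB

open Subgroup

variable {F : Type*} [Group F]

/-- Key lemma B: a maximal proper normal `F`-subgroup of the product contains the kernel of
one of the block projections. -/
lemma lemB {k : ℕ} (G : Fin k → Type*) [∀ i, Group (G i)] [∀ i, MulDistribMulAction F (G i)]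
    (hirr : ∀ i, IsIrreducibleFGroup F (G i))
    (hnoniso : ∀ i j, i ≠ j → ¬ IsFIso F (G i) (G j)) (m : Fin k → ℕ)
    (M : Subgroup (∀ i, Fin (m i) → G i)) (hM : IsNormalFSubgroup F M) (hMne : M ≠ ⊤)
    (hmax : ∀ K : Subgroup (∀ i, Fin (m i) → G i), IsNormalFSubgroup F K → M < K → K = ⊤) :
    ∃ i, MonoidHom.ker (Pi.evalMonoidHom (fun i => Fin (m i) → G i) i) ≤ M := by
  classical
  set A : Fin k → Type _ := fun i => Fin (m i) → G i with hA
  set blk : Fin k → Subgroup (∀ i, A i) := fun j => (MonoidHom.mulSingle A j).range with hblkdef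
  have hblk : ∀ j, IsNormalFSubgroup F (blk j) := fun j => mulSingleRange_normalF j
  have halt : ∀ j, M ⊔ blk j = M ∨ M ⊔ blk j = ⊤ := by
    intro j
    rcases eq_or_lt_of_le (le_sup_left : M ≤ M ⊔ blk j) with h | h
    · exact Or.inl h.symm
    · exact Or.inr (hmax _ (isNormalF_sup hM (hblk j)) h)
  have hle_of_eq : ∀ j, M ⊔ blk j = M → blk j ≤ M := fun j h => le_sup_right.trans h.le
  have hex : ∃ i, M ⊔ blk i = ⊤ := by
    by_contra h
    push_neg at h
    apply hMne
    rw [eq_top_iff]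
    intro x _
    apply mem_of_mulSingle_mem
    intro j
    have hj : blk j ≤ M := by
      rcases halt j with h' | h'
      · exact hle_of_eq j h'
      · exact absurd h' (h j)
    exact hj ⟨x j, rfl⟩
  obtain ⟨i, hi⟩ := hex
  haveI nM : M.Normal := hM.1
  letI : MulDistribMulAction F ((∀ i, A i) ⧸ M) := quotFAction M hM.2
  have hmkF : IsFHom F (QuotientGroup.mk' M) := by
    intro f x
    exact (QuotientGroup.map_mk M M (MulDistribMulAction.toMonoidHom _ f) _ x).symm
  have hQnt : Nontrivial ((∀ i, A i) ⧸ M) := by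
    obtain ⟨x, hx⟩ : ∃ x, x ∉ M := by
      by_contra h
      push_neg at h
      exact hMne (eq_top_iff.2 fun y _ => h y)
    exact ⟨QuotientGroup.mk x, 1, by simpa [QuotientGroup.eq_one_iff] using hx⟩
  have hQirr : ∀ K : Subgroup ((∀ i, A i) ⧸ M), IsNormalFSubgroup F K → K = ⊥ ∨ K = ⊤ := by
    intro K hK
    have hcomap := isNormalF_comap hmkF hK
    have hMle : M ≤ K.comap (QuotientGroup.mk' M) := by
      intro x hx
      have : QuotientGroup.mk' M x = 1 := (QuotientGroup.eq_one_iff x).2 hx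
      exact Subgroup.mem_comap.2 (this ▸ K.one_mem)
    have hKmap : Subgroup.map (QuotientGroup.mk' M) (K.comap (QuotientGroup.mk' M)) = K :=
      Subgroup.map_comap_eq_self_of_surjective (QuotientGroup.mk'_surjective M) K
    rcases eq_or_lt_of_le hMle with h | h
    · left
      rw [← hKmap, ← h, eq_bot_iff]
      rintro q ⟨x, hx, rfl⟩
      simpa [QuotientGroup.eq_one_iff] using hx
    · right
      rw [← hKmap, hmax _ hcomap h]
      exact Subgroup.map_top_of_surjective _ (QuotientGroup.mk'_surjective M)
  have hsurj : ∀ j, M ⊔ blk j = ⊤ → Function.Surjective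
      ((QuotientGroup.mk' M).comp (MonoidHom.mulSingle A j)) := by
    intro j hj q
    obtain ⟨r, rfl⟩ := QuotientGroup.mk'_surjective M q
    have hr : r ∈ ((M ⊔ blk j : Subgroup (∀ i, A i)) : Set (∀ i, A i)) := by
      rw [hj]; trivial
    rw [Subgroup.normal_mul] at hr
    obtain ⟨mel, hmel, bel, hbel, rfl⟩ := hr
    obtain ⟨a, rfl⟩ := hbel
    refine ⟨a, ?_⟩
    show QuotientGroup.mk' M (MonoidHom.mulSingle A j a) = QuotientGroup.mk' M (mel * _)
    rw [map_mul]
    have : QuotientGroup.mk' M mel = 1 := (QuotientGroup.eq_one_iff mel).2 hmel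
    rw [this, one_mul]
  have hFiso : ∀ j, M ⊔ blk j = ⊤ → IsFIso F (G j) ((∀ i, A i) ⧸ M) := by
    intro j hj
    have hcompF : IsFHom F ((QuotientGroup.mk' M).comp (MonoidHom.mulSingle A j)) := by
      intro f a
      show QuotientGroup.mk' M (MonoidHom.mulSingle A j (f • a)) = _
      rw [MonoidHom.mulSingle_apply, ← smul_mulSingle', hmkF]
      rfl
    exact lemA (hirr j) hQnt hQirr _ (hsurj j hj) hcompF
  have huniq : ∀ j, j ≠ i → blk j ≤ M := by
    intro j hji
    rcases halt j with h | h
    · exact hle_of_eq j h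
    · exfalso
      obtain ⟨ei, hei⟩ := hFiso i hi
      obtain ⟨ej, hej⟩ := hFiso j h
      apply hnoniso j i hji
      refine ⟨ej.trans ei.symm, fun f a => ?_⟩
      have h1 : ei ((ei.symm (ej (f • a)))) = ei (f • ei.symm (ej a)) := by
        rw [MulEquiv.apply_symm_apply, hej, hei, MulEquiv.apply_symm_apply]
      exact ei.injective h1
  refine ⟨i, ?_⟩
  intro r hr
  have hri : r i = 1 := hr
  apply mem_of_mulSingle_mem
  intro j
  by_cases hji : j = i
  · subst hji
    rw [hri]
    simpa using M.one_mem
  · exact huniq j hji ⟨r j, rfl⟩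

end ProofB

/-- the count of generating `N`-tuples of `R = ∏ᵢ Gᵢ^{mᵢ}` splits as a
product over the blocks. -/
theorem count_tuples_prod_blocks
    {F : Type*} [Group F] {k : ℕ} (G : Fin k → Type*)
    [∀ i, Group (G i)] [∀ i, MulDistribMulAction F (G i)] [∀ i, Finite (G i)]
    (hirr : ∀ i, IsIrreducibleFGroup F (G i))
    (hnoniso : ∀ i j, i ≠ j → ¬ IsFIso F (G i) (G j))
    (m : Fin k → ℕ) (N : ℕ) (hN : 0 < N) :
    Nat.card {x : Fin N → (∀ i, Fin (m i) → G i) //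
        normalFClosure F (Set.range x) = ⊤} =
      ∏ i : Fin k, Nat.card {y : Fin N → (Fin (m i) → G i) //
        normalFClosure F (Set.range y) = ⊤} := by
  classical
  have hevalF : ∀ i : Fin k, IsFHom F (Pi.evalMonoidHom (fun i => Fin (m i) → G i) i) :=
    fun i f x => rfl
  have hevalsurj : ∀ i : Fin k,
      Function.Surjective (Pi.evalMonoidHom (fun i => Fin (m i) → G i) i) := by
    intro i b
    refine ⟨Function.update (1 : ∀ i, Fin (m i) → G i) i b, ?_⟩
    show Function.update (1 : ∀ i, Fin (m i) → G i) i b i = b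
    simp
  have key : ∀ x : Fin N → (∀ i, Fin (m i) → G i),
      normalFClosure F (Set.range x) = ⊤ ↔
        ∀ i, normalFClosure F (Set.range fun n => x n i) = ⊤ := by
    intro x
    simp only [normalFClosure_eq_top_iff']
    constructor
    · intro hx i H hH hsub
      have hcomap := isNormalF_comap (hevalF i) hH
      have htop : Subgroup.comap (Pi.evalMonoidHom (fun i => Fin (m i) → G i) i) H = ⊤ := by
        apply hx _ hcomap
        rintro _ ⟨n, rfl⟩
        exact Subgroup.mem_comap.2 (hsub ⟨n, rfl⟩)
      rw [eq_top_iff]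
      intro b _
      obtain ⟨r, rfl⟩ := hevalsurj i b
      have : r ∈ Subgroup.comap (Pi.evalMonoidHom (fun i => Fin (m i) → G i) i) H := by
        rw [htop]; trivial
      exact this
    · intro hx H hH hsub
      by_contra hne
      haveI : Finite (Subgroup (∀ i, Fin (m i) → G i)) :=
        Finite.of_injective (fun H => (H : Set (∀ i, Fin (m i) → G i))) SetLike.coe_injective
      set S : Set (Subgroup (∀ i, Fin (m i) → G i)) :=
        {K | IsNormalFSubgroup F K ∧ K ≠ ⊤ ∧ H ≤ K} with hS
      obtain ⟨M, hMS, hMmax⟩ := Set.Finite.exists_maximalFor id S (Set.toFinite S)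
        ⟨H, hH, hne, le_rfl⟩
    -- M is a maximal proper normal F-subgroup containing H
      have hmax : ∀ K : Subgroup (∀ i, Fin (m i) → G i),
          IsNormalFSubgroup F K → M < K → K = ⊤ := by
        intro K hK hMK
        by_contra hKne
        exact absurd (hMmax (show K ∈ S from ⟨hK, hKne, hMS.2.2.trans hMK.le⟩) hMK.le) (not_le_of_gt hMK)
      obtain ⟨i, hker⟩ := lemB G hirr hnoniso m M hMS.1 hMS.2.1 hmax
      have hmapF : IsNormalFSubgroup F
          (Subgroup.map (Pi.evalMonoidHom (fun i => Fin (m i) → G i) i) M) :=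
        isNormalF_map (hevalF i) (hevalsurj i) hMS.1
      have hmaptop : Subgroup.map (Pi.evalMonoidHom (fun i => Fin (m i) → G i) i) M = ⊤ := by
        apply hx i _ hmapF
        rintro _ ⟨n, rfl⟩
        exact ⟨x n, hMS.2.2 (hsub ⟨n, rfl⟩), rfl⟩
      apply hMS.2.1
      rw [eq_top_iff]
      intro r _
      have : (Pi.evalMonoidHom (fun i => Fin (m i) → G i) i) r ∈
          Subgroup.map (Pi.evalMonoidHom (fun i => Fin (m i) → G i) i) M := by
        rw [hmaptop]; trivial
      obtain ⟨s, hs, hsr⟩ := this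
      have hmem : s⁻¹ * r ∈ M := by
        apply hker
        show (s⁻¹ * r) i = 1
        have : s i = r i := hsr
        simp [Pi.mul_apply, Pi.inv_apply, this]
      have : s * (s⁻¹ * r) ∈ M := M.mul_mem hs hmem
      simpa using this
  have e : {x : Fin N → (∀ i, Fin (m i) → G i) // normalFClosure F (Set.range x) = ⊤} ≃
      ∀ i, {y : Fin N → (Fin (m i) → G i) // normalFClosure F (Set.range y) = ⊤} :=
    { toFun := fun x i => ⟨fun n => x.1 n i, (key x.1).1 x.2 i⟩
      invFun := fun y => ⟨fun n i => (y i).1 n, (key _).2 fun i => (y i).2⟩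
      left_inv := fun x => rfl
      right_inv := fun y => rfl }
  rw [Nat.card_congr e, Nat.card_pi]
end

section
/- Let F be a group, let G be a non-abelian irreducible F-group, let m be a natural number, and let N be a normal F-subgroup of G^m. Then N = G^m if and only if the image of N under each of the m coordinate projections G^m → G is a nontrivial subgroup of G. -/
/-- for a non-abelian irreducible `F`-group `G`, a normal
`F`-subgroup of `G^m` is everything iff each coordinate projection is nontrivial. -/
theorem normalFSubgroup_top_iff_proj_ne_bot
    {F G : Type*} [Group F] [Group G] [MulDistribMulAction F G]
    (hirr : IsIrreducibleFGroup F G)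
    (hna : ¬ ∀ a b : G, a * b = b * a)
    (m : ℕ) (N : Subgroup (Fin m → G))
    (hN : IsNormalFSubgroup F N) :
    N = ⊤ ↔ ∀ i : Fin m,
      Subgroup.map (Pi.evalMonoidHom (fun _ : Fin m => G) i) N ≠ ⊥ := by
  haveI := hirr.1
  constructor
  · intro h i
    subst h
    rw [Subgroup.map_top_of_surjective _
      (fun g => ⟨Function.update (1 : Fin m → G) i g, by simp [Pi.evalMonoidHom]⟩)]
    exact Ne.symm bot_ne_top
  · intro hproj
    -- Each projection is ⊤
    have hPtop : ∀ i : Fin m,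
        Subgroup.map (Pi.evalMonoidHom (fun _ : Fin m => G) i) N = ⊤ := by
      intro i
      have hnorm : IsNormalFSubgroup F
          (Subgroup.map (Pi.evalMonoidHom (fun _ : Fin m => G) i) N) := by
        constructor
        · exact Subgroup.Normal.map hN.1 _
            (fun g => ⟨Function.update (1 : Fin m → G) i g, by simp [Pi.evalMonoidHom]⟩)
        · rintro f x ⟨n, hn, rfl⟩
          exact ⟨f • n, hN.2 f n hn, rfl⟩
      rcases hirr.2 _ hnorm with h | h
      · exact absurd h (hproj i)
      · exact h
    -- The per-coordinate pullback subgroups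
    have hKtop : ∀ i : Fin m, (N.comap (MonoidHom.mulSingle (fun _ : Fin m => G) i)) = ⊤ := by
      intro i
      have hKnorm : IsNormalFSubgroup F
          (N.comap (MonoidHom.mulSingle (fun _ : Fin m => G) i)) := by
        constructor
        · constructor
          intro x hx g
          have : (Pi.mulSingle i (g * x * g⁻¹) : Fin m → G)
              = Pi.mulSingle i g * Pi.mulSingle i x * (Pi.mulSingle i g)⁻¹ := by
            funext j
            by_cases hj : j = i
            · subst hj; simp
            · simp [Pi.mulSingle_eq_of_ne hj]
          show Pi.mulSingle i (g * x * g⁻¹) ∈ N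
          rw [this]
          exact hN.1.conj_mem _ hx _
        · intro f x hx
          show Pi.mulSingle i (f • x) ∈ N
          have : Pi.mulSingle i (f • x) = f • (Pi.mulSingle i x : Fin m → G) := by
            funext j
            by_cases hj : j = i
            · subst hj; simp
            · simp [Pi.mulSingle_eq_of_ne hj, smul_one]
          rw [this]
          exact hN.2 f _ hx
      rcases hirr.2 _ hKnorm with h | h
      · exfalso
        push_neg at hna
        obtain ⟨a, b, hab⟩ := hna
        -- b is in the image of the i-th projection
        have hb : b ∈ Subgroup.map (Pi.evalMonoidHom (fun _ : Fin m => G) i) N := by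
          rw [hPtop i]; trivial
        obtain ⟨n, hn, hni⟩ := hb
        have hw : Pi.mulSingle i a * n * (Pi.mulSingle i a)⁻¹ * n⁻¹ ∈ N := by
          have := hN.1.conj_mem n hn (Pi.mulSingle i a)
          exact N.mul_mem this (N.inv_mem hn)
        have heq : Pi.mulSingle i a * n * (Pi.mulSingle i a)⁻¹ * n⁻¹
            = Pi.mulSingle i (a * b * a⁻¹ * b⁻¹) := by
          funext j
          by_cases hj : j = i
          · subst hj
            have hni' : n j = b := hni
            simp [hni']
          · simp [Pi.mulSingle_eq_of_ne hj]
        rw [heq] at hw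
        have : a * b * a⁻¹ * b⁻¹ ∈ (N.comap (MonoidHom.mulSingle (fun _ : Fin m => G) i)) := hw
        rw [h] at this
        have : a * b * a⁻¹ * b⁻¹ = 1 := this
        apply hab
        have := mul_eq_one_iff_eq_inv.mp this
        rw [mul_inv_eq_iff_eq_mul] at this
        group at this
        rw [this]
      · exact h
    -- conclude N = ⊤
    rw [eq_top_iff]
    intro x _
    rw [← Finset.noncommProd_mulSingle x]
    exact Subgroup.noncommProd_mem N _ (fun i _ => by
      have hx : x i ∈ N.comap (MonoidHom.mulSingle (fun _ : Fin m => G) i) := by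
        rw [hKtop i]; trivial
      exact hx)
end

section
/- Let F be a group, let G be an abelian irreducible F-group, let m ≥ 1 be an integer, and let N be a normal F-subgroup of G^m. Let Π : G^m → G^{m−1} be the projection onto the first m−1 coordinates and π_m : G^m → G the projection onto the last coordinate. Then N = G^m if and only if Π(N) = G^{m−1} and there is no group homomorphism ψ : G^{m−1} → G such that π_m(x) = ψ(Π(x)) for all x ∈ N. -/
/-- Projection of `G^m` onto its first `m - 1` coordinates, as a group homomorphism. -/
def firstCoordsHom {G : Type*} [Group G] (m : ℕ) : (Fin m → G) →* (Fin (m - 1) → G) where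
  toFun x i := x (Fin.castLE (Nat.sub_le m 1) i)
  map_one' := rfl
  map_mul' _ _ := rfl

/-- for an abelian irreducible `F`-group `G` and `m ≥ 1`, a normal
`F`-subgroup `N` of `G^m` is everything iff it projects onto `G^{m-1}` and the last
coordinate does not factor through the projection onto the first `m - 1` coordinates
on `N`. -/
theorem normalFSubgroup_top_iff_abelian
    {F G : Type*} [Group F] [Group G] [MulDistribMulAction F G]
    (hirr : IsIrreducibleFGroup F G)
    (hab : ∀ a b : G, a * b = b * a)
    (m : ℕ) (hm : 1 ≤ m) (N : Subgroup (Fin m → G))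
    (hN : IsNormalFSubgroup F N) :
    N = ⊤ ↔
      (Subgroup.map (firstCoordsHom m) N = ⊤ ∧
        ¬ ∃ ψ : (Fin (m - 1) → G) →* G, ∀ x ∈ N,
          x ⟨m - 1, Nat.sub_lt (Nat.lt_of_lt_of_le Nat.zero_lt_one hm) Nat.zero_lt_one⟩ =
            ψ (fun i => x (Fin.castLE (Nat.sub_le m 1) i))) := by
  classical
  have hlt : m - 1 < m := Nat.sub_lt (Nat.lt_of_lt_of_le Nat.zero_lt_one hm) Nat.zero_lt_one
  set lastIdx : Fin m := ⟨m - 1, hlt⟩ with hlastIdx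
  have hdich : ∀ i : Fin m, ((i : ℕ) < m - 1) ∨ i = lastIdx := by
    intro i
    rcases lt_or_ge (i : ℕ) (m - 1) with h | h
    · exact Or.inl h
    · right
      have h2 := i.isLt
      exact Fin.ext (show (i : ℕ) = m - 1 by omega)
  have hcast_ne : ∀ j : Fin (m - 1), Fin.castLE (Nat.sub_le m 1) j ≠ lastIdx := by
    intro j h
    have hj := j.isLt
    have hv : (j : ℕ) = m - 1 := congrArg Fin.val h
    omega
  constructor
  · rintro rfl
    refine ⟨?_, ?_⟩
    · rw [eq_top_iff]
      rintro u -
      refine ⟨fun i => if h : (i : ℕ) < m - 1 then u ⟨i, h⟩ else 1, trivial, ?_⟩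
      funext j
      show (if h : ((Fin.castLE (Nat.sub_le m 1) j : Fin m) : ℕ) < m - 1
          then u ⟨_, h⟩ else 1) = u j
      rw [dif_pos (show ((Fin.castLE (Nat.sub_le m 1) j : Fin m) : ℕ) < m - 1 from j.isLt)]
      exact congrArg u (Fin.ext rfl)
    · rintro ⟨ψ, hpsi⟩
      haveI := hirr.1
      obtain ⟨g, hg⟩ := exists_ne (1 : G)
      have h1 := hpsi (Pi.mulSingle lastIdx g) trivial
      rw [Pi.mulSingle_eq_same] at h1
      have h2 : (fun i => (Pi.mulSingle lastIdx g : Fin m → G) (Fin.castLE (Nat.sub_le m 1) i))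
          = (1 : Fin (m - 1) → G) := by
        funext i
        exact Pi.mulSingle_eq_of_ne (M := fun _ : Fin m => G) (hcast_ne i) g
      rw [h2, map_one] at h1
      exact hg h1
  · rintro ⟨hPmap, hpsi⟩
    set K : Subgroup G := N.comap (MonoidHom.mulSingle (fun _ : Fin m => G) lastIdx) with hKdef
    have hKnorm : IsNormalFSubgroup F K := by
      constructor
      · refine { conj_mem := ?_ }
        intro n hn g
        have heq : g * n * g⁻¹ = n := by rw [hab g n, mul_assoc, mul_inv_cancel, mul_one]
        rw [heq]; exact hn
      · intro f x hx
        have hkey : (MonoidHom.mulSingle (fun _ : Fin m => G) lastIdx) (f • x)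
            = f • ((MonoidHom.mulSingle (fun _ : Fin m => G) lastIdx) x) := by
          funext i
          by_cases h : i = lastIdx
          · subst h
            simp [MonoidHom.mulSingle_apply, Pi.mulSingle_eq_same]
          · simp [MonoidHom.mulSingle_apply, Pi.mulSingle_eq_of_ne h, smul_one]
        have : (MonoidHom.mulSingle (fun _ : Fin m => G) lastIdx) x ∈ N := hx
        rw [Subgroup.mem_comap, hkey]
        exact hN.2 f _ this
    rcases hirr.2 K hKnorm with hK | hK
    · -- K = ⊥ : construct ψ, contradiction
      exfalso
      have hsurj : ∀ u : Fin (m - 1) → G, ∃ x, x ∈ N ∧ firstCoordsHom m x = u := by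
        intro u
        have hu : u ∈ Subgroup.map (firstCoordsHom m) N := hPmap ▸ Subgroup.mem_top u
        obtain ⟨x, hx, hx'⟩ := hu
        exact ⟨x, hx, hx'⟩
      choose s hsN hsP using hsurj
      have hker : ∀ x ∈ N, firstCoordsHom m x = 1 → x lastIdx = 1 := by
        intro x hx h0
        have hxeq : Pi.mulSingle lastIdx (x lastIdx) = x := by
          funext i
          rcases hdich i with h | rfl
          · rw [Pi.mulSingle_eq_of_ne (by
              intro hc
              have hv : (i : ℕ) = m - 1 := congrArg Fin.val hc
              omega)]
            have h1 : x (Fin.castLE (Nat.sub_le m 1) ⟨(i : ℕ), h⟩) = 1 := congrFun h0 ⟨(i : ℕ), h⟩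
            have h2 : Fin.castLE (Nat.sub_le m 1) (⟨(i : ℕ), h⟩ : Fin (m - 1)) = i := Fin.ext rfl
            rw [h2] at h1
            exact h1.symm
          · rw [Pi.mulSingle_eq_same]
        have hxK : x lastIdx ∈ K := by
          rw [Subgroup.mem_comap]
          show Pi.mulSingle lastIdx (x lastIdx) ∈ N
          rw [hxeq]; exact hx
        rw [hK] at hxK
        exact hxK
      have hval : ∀ x ∈ N, x lastIdx = s (firstCoordsHom m x) lastIdx := by
        intro x hx
        set y := s (firstCoordsHom m x) with hy
        have h1 : x * y⁻¹ ∈ N := mul_mem hx (inv_mem (hsN _))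
        have h2 : firstCoordsHom m (x * y⁻¹) = 1 := by
          rw [map_mul, map_inv, hsP, mul_inv_cancel]
        have h3 := hker _ h1 h2
        have h4 : x lastIdx * (y lastIdx)⁻¹ = 1 := h3
        exact (mul_inv_eq_one.mp h4)
      refine hpsi ⟨{ toFun := fun u => s u lastIdx, map_one' := ?_, map_mul' := ?_ }, ?_⟩
      · have h1 := hval 1 (one_mem N)
        rw [map_one] at h1
        exact h1.symm
      · intro u v
        have h1 := hval (s u * s v) (mul_mem (hsN u) (hsN v))
        rw [map_mul, hsP, hsP] at h1
        exact h1.symm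
      · intro x hx
        exact hval x hx
    · -- K = ⊤ : N = ⊤
      rw [eq_top_iff]
      rintro x -
      have hu : firstCoordsHom m x ∈ Subgroup.map (firstCoordsHom m) N :=
        hPmap ▸ Subgroup.mem_top _
      obtain ⟨y, hyN, hy⟩ := hu
      have hkey : x * y⁻¹ = Pi.mulSingle lastIdx (x lastIdx * (y lastIdx)⁻¹) := by
        funext i
        rcases hdich i with h | rfl
        · rw [Pi.mulSingle_eq_of_ne (by
            intro hc
            have hv : (i : ℕ) = m - 1 := congrArg Fin.val hc
            omega)]
          have h1 : y (Fin.castLE (Nat.sub_le m 1) ⟨(i : ℕ), h⟩)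
              = x (Fin.castLE (Nat.sub_le m 1) ⟨(i : ℕ), h⟩) := congrFun hy ⟨(i : ℕ), h⟩
          have h2 : Fin.castLE (Nat.sub_le m 1) (⟨(i : ℕ), h⟩ : Fin (m - 1)) = i := Fin.ext rfl
          rw [h2] at h1
          show x i * (y i)⁻¹ = 1
          rw [h1, mul_inv_cancel]
        · rw [Pi.mulSingle_eq_same]
          rfl
      have hmem : x * y⁻¹ ∈ N := by
        rw [hkey]
        have : x lastIdx * (y lastIdx)⁻¹ ∈ K := hK ▸ Subgroup.mem_top _
        exact this
      have : (x * y⁻¹) * y ∈ N := mul_mem hmem hyN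
      rwa [inv_mul_cancel_right] at this
end

section
/- Let F be a group, let G be a finite non-abelian irreducible F-group, let m be a natural number, and let N be a positive integer. Then the number of N-tuples (y₁,…,y_N) ∈ (G^m)^N with [y₁,…,y_N]_F = G^m equals (|G|^N − 1)^m. -/
section Aux

variable {F : Type*} [Group F] {G : Type*} [Group G] [MulDistribMulAction F G]

lemma aux_subset_normalFClosure (s : Set G) : s ⊆ ↑(normalFClosure F s) := by
  intro x hx
  rw [normalFClosure, SetLike.mem_coe, Subgroup.mem_sInf]
  exact fun H hH => hH.2 hx

lemma aux_normalFClosure_isNormalF (s : Set G) :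
    IsNormalFSubgroup F (normalFClosure F s) := by
  constructor
  · constructor
    intro n hn g
    rw [normalFClosure, Subgroup.mem_sInf] at hn ⊢
    intro H hH
    exact hH.1.1.conj_mem n (hn H hH) g
  · intro f x hx
    rw [normalFClosure, Subgroup.mem_sInf] at hx ⊢
    intro H hH
    exact hH.1.2 f x (hx H hH)

lemma aux_normalFClosure_le {s : Set G} {H : Subgroup G}
    (h1 : IsNormalFSubgroup F H) (h2 : s ⊆ H) : normalFClosure F s ≤ H :=
  sInf_le ⟨h1, h2⟩

lemma aux_center_eq_bot (hirr : IsIrreducibleFGroup F G)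
    (hna : ¬ ∀ a b : G, a * b = b * a) : Subgroup.center G = ⊥ := by
  have hc : IsNormalFSubgroup F (Subgroup.center G) := by
    refine ⟨inferInstance, fun f x hx => ?_⟩
    rw [Subgroup.mem_center_iff] at hx ⊢
    intro g
    have : g = f • (f⁻¹ • g) := (smul_inv_smul f g).symm
    rw [this, ← smul_mul', ← smul_mul', hx]
  rcases hirr.2 _ hc with h | h
  · exact h
  · exact absurd (fun a b => by
      have := Subgroup.mem_center_iff.mp (h ▸ Subgroup.mem_top a)
      exact (this b).symm) hna

/-- Characterization of tuples generating `G^m` as a normal `F`-subgroup. -/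
lemma aux_closure_eq_top_iff [Finite G] (hirr : IsIrreducibleFGroup F G)
    (hna : ¬ ∀ a b : G, a * b = b * a) {m N : ℕ} (y : Fin N → (Fin m → G)) :
    normalFClosure F (Set.range y) = ⊤ ↔ ∀ i, ∃ j, y j i ≠ 1 := by
  have hcen := aux_center_eq_bot hirr hna
  constructor
  · -- if some coordinate is identically 1, closure lies in the kernel of eval
    intro htop i
    by_contra hcon
    push_neg at hcon
    set K : Subgroup (Fin m → G) := (Pi.evalMonoidHom (fun _ => G) i).ker with hK
    have hKn : IsNormalFSubgroup F K := by
      refine ⟨MonoidHom.normal_ker _, fun f x hx => ?_⟩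
      have : x i = 1 := hx
      show (f • x) i = 1
      rw [Pi.smul_apply, this, smul_one]
    have hle : normalFClosure F (Set.range y) ≤ K := by
      apply aux_normalFClosure_le hKn
      rintro _ ⟨j, rfl⟩
      exact hcon j
    rw [htop] at hle
    haveI := hirr.1
    obtain ⟨g, hg⟩ := exists_ne (1 : G)
    have : Pi.mulSingle i g ∈ K := hle (Subgroup.mem_top _)
    have : (Pi.mulSingle i g : Fin m → G) i = 1 := this
    rw [Pi.mulSingle_eq_same] at this
    exact hg this
  · intro hy
    set H := normalFClosure F (Set.range y) with hH
    have hHn : IsNormalFSubgroup F H := aux_normalFClosure_isNormalF _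
    -- for each coordinate i, all single elements lie in H
    have hsingle : ∀ (i : Fin m) (g : G), Pi.mulSingle i g ∈ H := by
      intro i
      set K : Subgroup G := H.comap (MonoidHom.mulSingle (fun _ => G) i) with hK
      have hKn : IsNormalFSubgroup F K := by
        constructor
        · constructor
          intro n hn g
          have : (MonoidHom.mulSingle (fun _ : Fin m => G) i) (g * n * g⁻¹)
              = Pi.mulSingle i g * Pi.mulSingle i n * (Pi.mulSingle i g)⁻¹ := by
            simp [Pi.mulSingle_mul, Pi.mulSingle_inv, mul_assoc]
          show (MonoidHom.mulSingle (fun _ : Fin m => G) i) (g * n * g⁻¹) ∈ H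
          rw [this]
          exact hHn.1.conj_mem _ hn _
        · intro f x hx
          show (MonoidHom.mulSingle (fun _ : Fin m => G) i) (f • x) ∈ H
          have : (MonoidHom.mulSingle (fun _ : Fin m => G) i) (f • x)
              = f • (MonoidHom.mulSingle (fun _ : Fin m => G) i) x := by
            funext k
            by_cases hk : k = i
            · subst hk; simp
            · simp [Pi.mulSingle_eq_of_ne hk]
          rw [this]
          exact hHn.2 f _ hx
      rcases hirr.2 K hKn with hbot | htp
      · -- K = ⊥ forces every h i (h ∈ H) central, contradiction with hy
        exfalso
        obtain ⟨j, hj⟩ := hy i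
        have hmem : y j ∈ H := aux_subset_normalFClosure _ ⟨j, rfl⟩
        have hcent : y j i ∈ Subgroup.center G := by
          rw [Subgroup.mem_center_iff]
          intro g
          -- commutator argument
          have hcomm : (y j)⁻¹ * (Pi.mulSingle i g * y j * (Pi.mulSingle i g)⁻¹) ∈ H := by
            exact H.mul_mem (H.inv_mem hmem)
              (hHn.1.conj_mem _ hmem _)
          have heq : (y j)⁻¹ * (Pi.mulSingle i g * y j * (Pi.mulSingle i g)⁻¹)
              = Pi.mulSingle i ((y j i)⁻¹ * (g * y j i * g⁻¹)) := by
            funext k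
            by_cases hk : k = i
            · subst hk; simp
            · simp [Pi.mulSingle_eq_of_ne hk]
          rw [heq] at hcomm
          have : (y j i)⁻¹ * (g * y j i * g⁻¹) ∈ K := hcomm
          rw [hbot, Subgroup.mem_bot] at this
          have h2 : y j i = g * y j i * g⁻¹ := inv_mul_eq_one.mp this
          calc g * y j i = (g * y j i * g⁻¹) * g := by group
            _ = y j i * g := by rw [← h2]
        rw [hcen, Subgroup.mem_bot] at hcent
        exact hj hcent
      · intro g
        have : g ∈ K := htp ▸ Subgroup.mem_top g
        exact this
    -- now every element of G^m lies in H, by induction on support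
    have hall : ∀ (s : Finset (Fin m)) (z : Fin m → G),
        (∀ k ∉ s, z k = 1) → z ∈ H := by
      intro s
      induction s using Finset.induction_on with
      | empty =>
        intro z hz
        have : z = 1 := funext fun k => hz k (Finset.notMem_empty k)
        rw [this]; exact H.one_mem
      | @insert i s hi ih =>
        intro z hz
        have hsplit : z = Pi.mulSingle i (z i) * Function.update z i 1 := by
          funext k
          by_cases hk : k = i
          · subst hk; simp
          · simp [Pi.mulSingle_eq_of_ne hk, Function.update_of_ne hk]
        rw [hsplit]
        refine H.mul_mem (hsingle i _) (ih _ fun k hk => ?_)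
        by_cases hk' : k = i
        · subst hk'; simp
        · rw [Function.update_of_ne hk']
          exact hz k (by simp [hk', hk])
    rw [eq_top_iff]
    intro z _
    exact hall Finset.univ z (fun k hk => absurd (Finset.mem_univ k) hk)

end Aux

/-- for a finite non-abelian irreducible `F`-group `G`, the number of
`N`-tuples in `G^m` generating `G^m` as a normal `F`-subgroup is `(|G|^N − 1)^m`. -/
theorem count_tuples_nonabelian
    {F G : Type*} [Group F] [Group G] [MulDistribMulAction F G] [Finite G]
    (hirr : IsIrreducibleFGroup F G)
    (hna : ¬ ∀ a b : G, a * b = b * a)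
    (m : ℕ) (N : ℕ) (hN : 0 < N) :
    (Nat.card {y : Fin N → (Fin m → G) //
        normalFClosure F (Set.range y) = ⊤} : ℤ) =
      ((Nat.card G : ℤ) ^ N - 1) ^ m := by
  classical
  haveI : Fintype G := Fintype.ofFinite G
  have e1 : {y : Fin N → (Fin m → G) // normalFClosure F (Set.range y) = ⊤}
      ≃ {y : Fin N → (Fin m → G) // ∀ i, ∃ j, y j i ≠ 1} :=
    Equiv.subtypeEquivRight fun y => aux_closure_eq_top_iff hirr hna y
  have e2 : {y : Fin N → (Fin m → G) // ∀ i, ∃ j, y j i ≠ 1}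
      ≃ {z : Fin m → (Fin N → G) // ∀ i, z i ≠ 1} := by
    refine (Equiv.piComm (fun _ _ => G)).subtypeEquiv fun y => ?_
    refine forall_congr' fun i => ⟨fun ⟨j, hj⟩ h => hj (congrFun h j), fun h => ?_⟩
    by_contra hc
    push_neg at hc
    exact h (funext fun j => hc j)
  have e3 : {z : Fin m → (Fin N → G) // ∀ i, z i ≠ 1}
      ≃ (Fin m → {w : Fin N → G // w ≠ 1}) :=
    Equiv.subtypePiEquivPi (p := fun _ w => w ≠ 1)
  have hcard1 : Nat.card {w : Fin N → G // w ≠ 1} = Nat.card G ^ N - 1 := by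
    rw [Nat.card_eq_fintype_card, Nat.card_eq_fintype_card]
    have : Fintype.card {w : Fin N → G // w ≠ 1}
        = Fintype.card (Fin N → G) - Fintype.card {w : Fin N → G // w = 1} :=
      Fintype.card_subtype_compl _
    rw [this, Fintype.card_subtype_eq, Fintype.card_pi]
    simp
  have hcard : Nat.card {y : Fin N → (Fin m → G) //
      normalFClosure F (Set.range y) = ⊤} = (Nat.card G ^ N - 1) ^ m := by
    rw [Nat.card_congr (e1.trans (e2.trans e3)), Nat.card_pi]
    simp [hcard1]
  rw [hcard]
  have h1 : 1 ≤ Nat.card G ^ N := Nat.one_le_pow _ _ Nat.card_pos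
  push_cast [Nat.cast_sub h1]
  ring
end
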